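/- arXiv:1507.01968 — 8 statements merged into one kernel-verified Lean document; each statement's English description precedes it below -/
import Mathlib

section
/- Let G be a finite group and let H and K be subgroups of G that are almost conjugate in G. If H is a normal subgroup of G, then H = K. -/
/-- If `H` and `K` are almost conjugate subgroups of a finite group `G`
(for every `g ∈ G` the number of elements of `H` conjugate to `g` equals the
number of elements of `K` conjugate to `g`) and `H` is normal in `G`, then `H = K`. -/
theorem eq_of_almostConj_of_normal {G : Type*} [Group G] [Finite G]
    (H K : Subgroup G)
    (hAC : ∀ g : G, Set.ncard {x : G | x ∈ H ∧ IsConj x g} =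
      Set.ncard {x : G | x ∈ K ∧ IsConj x g})
    (hN : H.Normal) : H = K := by
  -- Key fact: if x ∈ H and x is conjugate to g, then g ∈ H (normality).
  have hmem : ∀ x g : G, x ∈ H → IsConj x g → g ∈ H := by
    intro x g hx hconj
    obtain ⟨c, hc⟩ := isConj_iff.mp hconj
    rw [← hc]
    exact hN.conj_mem x hx c
  -- K ≤ H
  have hKH : K ≤ H := by
    intro g hg
    have hpos : 0 < Set.ncard {x : G | x ∈ H ∧ IsConj x g} := by
      rw [hAC g]
      exact Set.Nonempty.ncard_pos (Set.toFinite _) ⟨g, hg, IsConj.refl g⟩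
    obtain ⟨x, hxH, hx⟩ := Set.nonempty_of_ncard_ne_zero hpos.ne'
    exact hmem x g hxH hx
  -- H ≤ K
  have hHK : H ≤ K := by
    intro g hg
    have hHset : {x : G | x ∈ H ∧ IsConj x g} = {x : G | IsConj x g} := by
      ext x
      simp only [Set.mem_setOf_eq, and_iff_right_iff_imp]
      intro hx
      exact hmem g x hg hx.symm
    have hsub : {x : G | x ∈ K ∧ IsConj x g} ⊆ {x : G | IsConj x g} :=
      fun x hx => hx.2
    have hcard : Set.ncard {x : G | IsConj x g}
        ≤ Set.ncard {x : G | x ∈ K ∧ IsConj x g} := by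
      rw [← hAC g, hHset]
    have heq := Set.eq_of_subset_of_ncard_le hsub hcard (Set.toFinite _)
    have : g ∈ {x : G | x ∈ K ∧ IsConj x g} := by
      rw [heq]; exact IsConj.refl g
    exact this.1
  exact le_antisymm hHK hKH
end

section
/- Let S be a finite group with subgroups L and L' that are almost conjugate in S, and let K be any finite group. Then the subgroups L × K and L' × K of the direct product S × K are almost conjugate in S × K. -/
lemma prod_isConj_iff {S K : Type*} [Group S] [Group K] (x g : S × K) :
    IsConj x g ↔ IsConj x.1 g.1 ∧ IsConj x.2 g.2 := by
  simp only [isConj_iff]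
  constructor
  · rintro ⟨c, hc⟩
    exact ⟨⟨c.1, congrArg Prod.fst hc⟩, ⟨c.2, congrArg Prod.snd hc⟩⟩
  · rintro ⟨⟨c, hc⟩, ⟨d, hd⟩⟩
    exact ⟨(c, d), Prod.ext hc hd⟩

lemma ncard_prod_set {S K : Type*} (s : Set S) (t : Set K) :
    (s ×ˢ t).ncard = s.ncard * t.ncard := by
  rw [← Nat.card_coe_set_eq, ← Nat.card_coe_set_eq, ← Nat.card_coe_set_eq,
    Nat.card_congr (Equiv.Set.prod s t), Nat.card_prod]

/-- If `L` and `L'` are almost conjugate subgroups of a finite group `S` and `K` is any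
finite group, then `L × K` and `L' × K` are almost conjugate subgroups of `S × K`. -/
theorem almostConj_prod {S : Type*} [Group S] [Finite S] {K : Type*} [Group K] [Finite K]
    (L L' : Subgroup S)
    (hAC : ∀ g : S, Set.ncard {x : S | x ∈ L ∧ IsConj x g} =
      Set.ncard {x : S | x ∈ L' ∧ IsConj x g}) :
    ∀ g : S × K, Set.ncard {x : S × K | x ∈ L.prod (⊤ : Subgroup K) ∧ IsConj x g} =
      Set.ncard {x : S × K | x ∈ L'.prod (⊤ : Subgroup K) ∧ IsConj x g} := by
  intro g
  have key : ∀ M : Subgroup S,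
      {x : S × K | x ∈ M.prod (⊤ : Subgroup K) ∧ IsConj x g} =
      {a : S | a ∈ M ∧ IsConj a g.1} ×ˢ {b : K | IsConj b g.2} := by
    intro M
    ext ⟨a, b⟩
    simp only [Set.mem_setOf_eq, Set.mem_prod, Subgroup.mem_prod, Subgroup.mem_top,
      and_true, prod_isConj_iff, and_assoc]
  rw [key L, key L', ncard_prod_set, ncard_prod_set, hAC g.1]
end

section
/- Let S be a group with subgroups L and L' such that (i) L and L' are elementwise conjugate in S, and (ii) the normal core of L in S and the normal core of L' in S are both trivial. Then for every positive integer k, the subgroups L^(×k) and L'^(×k) of the k-fold direct power S^(×k) (i.e., the functions Fin k → S with all values in L, respectively in L') are elementwise conjugate in S^(×k), and the normal cores of L^(×k) and of L'^(×k) in S^(×k) are both trivial. If moreover S is finite and L and L' are almost conjugate in S, then L^(×k) and L'^(×k) are almost conjugate in S^(×k). -/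
private lemma isConj_pi_iff {ι : Type*} {S : Type*} [Group S] {x y : ι → S} :
    IsConj x y ↔ ∀ i, IsConj (x i) (y i) := by
  simp only [isConj_iff]
  constructor
  · rintro ⟨c, hc⟩ i
    exact ⟨c i, congrFun hc i⟩
  · intro h
    choose c hc using h
    exact ⟨c, funext hc⟩

private lemma set_eq_pi {S : Type*} [Group S] (L : Subgroup S) (k : ℕ) (g : Fin k → S) :
    {x : Fin k → S | x ∈ Subgroup.pi Set.univ (fun _ => L) ∧ IsConj x g} =
      Set.pi Set.univ (fun i => {x : S | x ∈ L ∧ IsConj x (g i)}) := by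
  ext x
  simp only [Set.mem_setOf_eq, Subgroup.mem_pi, Set.mem_pi, Set.mem_univ, true_implies,
    isConj_pi_iff]
  exact ⟨fun ⟨h1, h2⟩ i => ⟨h1 i, h2 i⟩, fun h => ⟨fun i => (h i).1, fun i => (h i).2⟩⟩

private lemma ncard_univ_pi {ι : Type*} [Fintype ι] {α : Type*} (t : ι → Set α) :
    (Set.pi Set.univ t).ncard = ∏ i, (t i).ncard := by
  simp only [← Nat.card_coe_set_eq]
  rw [Nat.card_congr (Equiv.Set.univPi t), Nat.card_pi]

/-- Passing to finite direct powers preserves elementwise conjugacy (EC), the triviality of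
normal cores (FF), and — when the ambient group is finite — almost conjugacy (AC). -/
theorem pi_elementwiseConj_normalCore_almostConj {S : Type*} [Group S]
    (L L' : Subgroup S)
    (hEC : (∀ h ∈ L, ∃ k ∈ L', IsConj h k) ∧ (∀ k ∈ L', ∃ h ∈ L, IsConj k h))
    (hFF : L.normalCore = ⊥ ∧ L'.normalCore = ⊥)
    (k : ℕ) (hk : 0 < k) :
    ((∀ h ∈ Subgroup.pi Set.univ (fun _ : Fin k => L),
        ∃ h' ∈ Subgroup.pi Set.univ (fun _ : Fin k => L'), IsConj h h') ∧
      (∀ h' ∈ Subgroup.pi Set.univ (fun _ : Fin k => L'),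
        ∃ h ∈ Subgroup.pi Set.univ (fun _ : Fin k => L), IsConj h' h)) ∧
    (Subgroup.pi Set.univ (fun _ : Fin k => L)).normalCore = ⊥ ∧
    (Subgroup.pi Set.univ (fun _ : Fin k => L')).normalCore = ⊥ ∧
    (Finite S →
      (∀ g : S, Set.ncard {x : S | x ∈ L ∧ IsConj x g} =
        Set.ncard {x : S | x ∈ L' ∧ IsConj x g}) →
      (∀ g : Fin k → S,
        Set.ncard {x : Fin k → S | x ∈ Subgroup.pi Set.univ (fun _ => L) ∧ IsConj x g} =
        Set.ncard {x : Fin k → S | x ∈ Subgroup.pi Set.univ (fun _ => L') ∧ IsConj x g})) := by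
  have hEC' : ∀ (A B : Subgroup S), (∀ h ∈ A, ∃ k ∈ B, IsConj h k) →
      ∀ h ∈ Subgroup.pi Set.univ (fun _ : Fin k => A),
        ∃ h' ∈ Subgroup.pi Set.univ (fun _ : Fin k => B), IsConj h h' := by
    intro A B hAB h hh
    choose f hfB hfc using fun i => hAB (h i) (hh i trivial)
    exact ⟨f, fun i _ => hfB i, isConj_pi_iff.mpr hfc⟩
  have hcore : ∀ (A : Subgroup S), A.normalCore = ⊥ →
      (Subgroup.pi Set.univ (fun _ : Fin k => A)).normalCore = ⊥ := by
    intro A hA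
    rw [eq_bot_iff]
    intro x hx
    have : ∀ i, x i = 1 := by
      intro i
      have hxi : x i ∈ A.normalCore := by
        intro b
        exact hx (fun _ => b) i trivial
      rw [hA] at hxi
      exact hxi
    exact funext this
  refine ⟨⟨hEC' L L' hEC.1, hEC' L' L hEC.2⟩, hcore L hFF.1, hcore L' hFF.2, ?_⟩
  intro _ hAC g
  rw [set_eq_pi, set_eq_pi, ncard_univ_pi, ncard_univ_pi]
  exact Finset.prod_congr rfl fun i _ => hAC (g i)
end

section
/- Let G be a finite group, U a subgroup of G, and g ∈ G. Let Fix(g, G/U) denote the set of left cosets xU ∈ G/U with g·xU = xU. Then |Fix(g, G/U)| · |U| = |{u ∈ U : u is conjugate to g in G}| · |C_G(g)|, where C_G(g) is the centralizer of g in G. -/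
/-- Counting fixed cosets: for a finite group `G`, a subgroup `U` and `g ∈ G`,
`|Fix(g, G/U)| ⬝ |U| = |U ∩ gᴳ| ⬝ |C_G(g)|`. -/
theorem card_fixed_cosets_mul_card_eq {G : Type*} [Group G] [Finite G]
    (U : Subgroup G) (g : G) :
    Nat.card {x : G ⧸ U | g • x = x} * Nat.card U =
      Set.ncard {u : G | u ∈ U ∧ IsConj u g} *
        Nat.card (Subgroup.centralizer ({g} : Set G)) := by
  classical
  set S : Set G := {x : G | x⁻¹ * g * x ∈ U} with hS
  set T : Set G := {u : G | u ∈ U ∧ IsConj u g} with hT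
  -- bijection Fix × U ≃ S
  have f1 : ∀ p : {x : G ⧸ U | g • x = x} × U, ((p.1 : G ⧸ U).out * p.2 : G) ∈ S := by
    rintro ⟨⟨q, hq⟩, ⟨u, hu⟩⟩
    simp only [hS, Set.mem_setOf_eq]
    have hq' : g • q = q := hq
    have h1 : (QuotientGroup.mk (g * q.out) : G ⧸ U) = QuotientGroup.mk q.out := by
      calc (QuotientGroup.mk (g * q.out) : G ⧸ U) = g • (QuotientGroup.mk q.out : G ⧸ U) := rfl
        _ = g • q := by rw [QuotientGroup.out_eq']
        _ = q := hq'
        _ = QuotientGroup.mk q.out := (QuotientGroup.out_eq' q).symm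
    have h2 : (g * q.out)⁻¹ * q.out ∈ U := QuotientGroup.eq.mp h1
    have h3 : q.out⁻¹ * g * q.out ∈ U := by
      have := U.inv_mem h2
      simpa [mul_assoc] using this
    have : (q.out * u)⁻¹ * g * (q.out * u) = u⁻¹ * (q.out⁻¹ * g * q.out) * u := by
      group
    rw [this]
    exact U.mul_mem (U.mul_mem (U.inv_mem hu) h3) hu
  have hb1 : Function.Bijective (fun p : {x : G ⧸ U | g • x = x} × U =>
      (⟨(p.1 : G ⧸ U).out * p.2, f1 p⟩ : S)) := by
    constructor
    · rintro ⟨⟨q, hq⟩, ⟨u, hu⟩⟩ ⟨⟨q', hq'⟩, ⟨u', hu'⟩⟩ h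
      simp only [Subtype.mk.injEq] at h
      have hqq : q = q' := by
        have e1 : (QuotientGroup.mk (q.out * u) : G ⧸ U) = q := by
          rw [QuotientGroup.mk_mul_of_mem _ hu, QuotientGroup.out_eq']
        have e2 : (QuotientGroup.mk (q'.out * u') : G ⧸ U) = q' := by
          rw [QuotientGroup.mk_mul_of_mem _ hu', QuotientGroup.out_eq']
        rw [← e1, ← e2, h]
      subst hqq
      have huu : u = u' := mul_left_cancel h
      subst huu
      rfl
    · rintro ⟨x, hx⟩
      have hx' : x⁻¹ * g * x ∈ U := hx
      have hfix : g • (QuotientGroup.mk x : G ⧸ U) = QuotientGroup.mk x := by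
        show (QuotientGroup.mk (g * x) : G ⧸ U) = QuotientGroup.mk x
        rw [QuotientGroup.eq]
        simpa [mul_assoc] using U.inv_mem (by simpa [mul_assoc] using hx' : x⁻¹ * (g * x) ∈ U)
      set q : G ⧸ U := QuotientGroup.mk x with hqdef
      have hmem : q.out⁻¹ * x ∈ U := by
        rw [← QuotientGroup.eq, QuotientGroup.out_eq']
      refine ⟨⟨⟨q, hfix⟩, ⟨q.out⁻¹ * x, hmem⟩⟩, ?_⟩
      simp [mul_assoc]
  -- bijection T × C ≃ S
  choose r hr using fun u : T => isConj_iff.mp u.2.2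
  have hr' : ∀ u : T, (r u)⁻¹ * g * (r u) = u := by
    intro u
    rw [← hr u]
    group
  have key : ∀ (v : T) (d : Subgroup.centralizer ({g} : Set G)),
      ((d : G) * r v)⁻¹ * g * ((d : G) * r v) = (v : G) := by
    intro v d
    have hc : (d : G) * g = g * (d : G) :=
      (Subgroup.mem_centralizer_iff.mp d.2 g (Set.mem_singleton g)).symm
    have e : ((d : G) * r v)⁻¹ * g * ((d : G) * r v)
        = (r v)⁻¹ * ((d : G)⁻¹ * g * (d : G)) * r v := by group
    rw [e, show (d : G)⁻¹ * g * (d : G) = g by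
      rw [mul_assoc, ← hc, ← mul_assoc, inv_mul_cancel, one_mul], hr' v]
  have f2 : ∀ p : T × (Subgroup.centralizer ({g} : Set G)), ((p.2 : G) * r p.1 : G) ∈ S := by
    rintro ⟨u, c⟩
    simp only [hS, Set.mem_setOf_eq]
    rw [key u c]
    exact u.2.1
  have hb2 : Function.Bijective (fun p : T × (Subgroup.centralizer ({g} : Set G)) =>
      (⟨(p.2 : G) * r p.1, f2 p⟩ : S)) := by
    constructor
    · rintro ⟨u, c⟩ ⟨u', c'⟩ h
      simp only [Subtype.mk.injEq] at h
      have huu : (u : G) = (u' : G) := by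
        rw [← key u c, ← key u' c', h]
      have huu2 : u = u' := Subtype.ext huu
      subst huu2
      have hcc : c = c' := Subtype.ext (mul_right_cancel h)
      subst hcc
      rfl
    · rintro ⟨x, hx⟩
      have hx' : x⁻¹ * g * x ∈ U := hx
      have hu : (x⁻¹ * g * x) ∈ T := ⟨hx', isConj_iff.mpr ⟨x, by group⟩⟩
      set u : T := ⟨x⁻¹ * g * x, hu⟩ with hudef
      have h1 : (r u)⁻¹ * g * (r u) = x⁻¹ * g * x := hr' u
      have h2 : (x * (r u)⁻¹)⁻¹ * g * (x * (r u)⁻¹) = g := by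
        have e : (x * (r u)⁻¹)⁻¹ * g * (x * (r u)⁻¹) = r u * (x⁻¹ * g * x) * (r u)⁻¹ := by
          group
        rw [e, ← h1]; group
      have hcmem : x * (r u)⁻¹ ∈ Subgroup.centralizer ({g} : Set G) := by
        rw [Subgroup.mem_centralizer_iff]
        intro y hy
        rw [Set.mem_singleton_iff] at hy
        rw [hy]
        calc g * (x * (r u)⁻¹)
            = (x * (r u)⁻¹) * ((x * (r u)⁻¹)⁻¹ * g * (x * (r u)⁻¹)) := by group
          _ = (x * (r u)⁻¹) * g := by rw [h2]
      refine ⟨⟨u, ⟨x * (r u)⁻¹, hcmem⟩⟩, ?_⟩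
      simp [mul_assoc]
  have c1 := Nat.card_eq_of_bijective _ hb1
  have c2 := Nat.card_eq_of_bijective _ hb2
  rw [Nat.card_prod] at c1 c2
  have hTn : Set.ncard T = Nat.card T := (Nat.card_coe_set_eq T).symm
  rw [c1, hTn]
  exact c2.symm
end

section
/- Let K be a field, let V be a finite-dimensional K-vector space, and let f : V → V be a linear automorphism. Then f has an eigenvector (there exist v ∈ V with v ≠ 0 and λ ∈ K with f(v) = λ·v) if and only if f stabilizes some hyperplane of V, i.e., there exists a subspace W of V with dim W + 1 = dim V and f(W) = W. -/
/-- A linear automorphism of a finite-dimensional vector space has an eigenvector if and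
only if it stabilizes a hyperplane. -/
theorem hasEigenvector_iff_stabilizes_hyperplane {K V : Type*} [Field K]
    [AddCommGroup V] [Module K V] [FiniteDimensional K V] (f : V ≃ₗ[K] V) :
    (∃ v : V, v ≠ 0 ∧ ∃ lam : K, f v = lam • v) ↔
      (∃ W : Submodule K V, Module.finrank K W + 1 = Module.finrank K V ∧
        W.map (f : V →ₗ[K] V) = W) := by
  constructor
  · rintro ⟨v, hv, lam, hfv⟩
    set T : V →ₗ[K] V := (f : V →ₗ[K] V) - lam • LinearMap.id with hT
    have hTv : T v = 0 := by simp [hT, hfv]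
    have hrange : LinearMap.range T < ⊤ := by
      rcases (le_top : LinearMap.range T ≤ ⊤).lt_or_eq with h | h
      · exact h
      · exfalso
        have hinj : Function.Injective T :=
          LinearMap.injective_iff_surjective.mpr (LinearMap.range_eq_top.mp h)
        exact hv (by simpa [hTv] using hinj (a₂ := 0) (by simpa using hTv))
    obtain ⟨φ, hφ, hφT⟩ := Submodule.exists_dual_map_eq_bot_of_lt_top hrange inferInstance
    have key : ∀ x, φ (f x) = lam * φ x := by
      intro x
      have hmem : T x ∈ LinearMap.range T := LinearMap.mem_range_self T x
      have h0 : φ (T x) = 0 := by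
        have : φ (T x) ∈ (LinearMap.range T).map φ := Submodule.mem_map_of_mem hmem
        rw [hφT] at this
        simpa using this
      have : φ (f x) - lam * φ x = 0 := by
        simpa [hT, LinearMap.sub_apply, map_sub, map_smul, smul_eq_mul] using h0
      exact sub_eq_zero.mp this
    refine ⟨LinearMap.ker φ, Module.Dual.finrank_ker_add_one_of_ne_zero hφ, ?_⟩
    have hle : (LinearMap.ker φ).map (f : V →ₗ[K] V) ≤ LinearMap.ker φ := by
      rintro x ⟨w, hw, rfl⟩
      have := LinearMap.mem_ker.mp hw
      simp [LinearMap.mem_ker, key, this]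
    refine Submodule.eq_of_le_of_finrank_le hle ?_
    rw [LinearEquiv.finrank_map_eq]
  · rintro ⟨W, hW, hfW⟩
    have hWlt : W < ⊤ := by
      rcases (le_top : W ≤ ⊤).lt_or_eq with h | h
      · exact h
      · exfalso
        rw [h, finrank_top] at hW
        omega
    obtain ⟨φ, hφ, hφW⟩ := Submodule.exists_dual_map_eq_bot_of_lt_top hWlt inferInstance
    have hWker : W ≤ LinearMap.ker φ := by
      intro x hx
      have : φ x ∈ W.map φ := Submodule.mem_map_of_mem hx
      rw [hφW] at this
      simpa using this
    have hker : LinearMap.ker φ = W := by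
      refine (Submodule.eq_of_le_of_finrank_le hWker ?_).symm
      have h1 := Module.Dual.finrank_ker_add_one_of_ne_zero hφ
      omega
    set ψ : Module.Dual K V := φ.comp (f : V →ₗ[K] V) with hψ
    have hmemW : ∀ x, f x ∈ W ↔ x ∈ W := by
      intro x
      constructor
      · intro hx
        rw [← hfW] at hx
        obtain ⟨w, hw, hwx⟩ := hx
        rwa [← f.injective hwx]
      · intro hx
        rw [← hfW]
        exact ⟨x, hx, rfl⟩
    have hkerψ : LinearMap.ker ψ = LinearMap.ker φ := by
      ext x
      simp only [LinearMap.mem_ker, hψ, LinearMap.comp_apply]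
      rw [← LinearMap.mem_ker, ← LinearMap.mem_ker, hker]
      exact hmemW x
    obtain ⟨x0, hx0⟩ : ∃ x, φ x ≠ 0 := by
      by_contra h
      push_neg at h
      exact hφ (LinearMap.ext fun x => by simp [h x])
    have hψx0 : ψ x0 ≠ 0 := by
      intro h
      exact hx0 (by rwa [← LinearMap.mem_ker, ← hkerψ, LinearMap.mem_ker])
    set c : K := ψ x0 * (φ x0)⁻¹ with hc
    have hcne : c ≠ 0 := mul_ne_zero hψx0 (inv_ne_zero hx0)
    have heq : ψ = c • φ := by
      refine Module.Dual.eq_of_ker_eq_of_apply_eq x0 ?_ ?_ hψx0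
      · rw [hkerψ, LinearMap.ker_smul _ _ hcne]
      · simp only [LinearMap.smul_apply, smul_eq_mul, hc]
        field_simp
    set T : V →ₗ[K] V := (f : V →ₗ[K] V) - c • LinearMap.id with hT
    have hTφ : T.dualMap φ = 0 := by
      ext x
      have : ψ x = c * φ x := by rw [heq]; simp
      simp only [LinearMap.dualMap_apply, hT, LinearMap.sub_apply, LinearMap.smul_apply,
        LinearMap.id_apply, map_sub, map_smul, smul_eq_mul, LinearMap.zero_apply]
      have hx : φ (f x) = ψ x := by simp [hψ]
      exact sub_eq_zero.mpr (hx.trans this)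
    have hninj : ¬ Function.Injective T := by
      intro hinj
      have hsurj := LinearMap.injective_iff_surjective.mp hinj
      have hdinj := LinearMap.dualMap_injective_of_surjective hsurj
      exact hφ (hdinj (by simp [hTφ]))
    have hker' : LinearMap.ker T ≠ ⊥ := fun h => hninj (LinearMap.ker_eq_bot.mp h)
    obtain ⟨v, hvmem, hv⟩ := Submodule.exists_mem_ne_zero_of_ne_bot hker'
    refine ⟨v, hv, c, ?_⟩
    have : T v = 0 := LinearMap.mem_ker.mp hvmem
    have : (f : V →ₗ[K] V) v - c • v = 0 := by simpa [hT] using this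
    have := sub_eq_zero.mp this
    simpa using this
end

section
/- Let K be a field and V a finite-dimensional K-vector space with dim V ≥ 1. Fix a one-dimensional subspace x₀ of V and a hyperplane W₀ of V, and set S = GL(V), L = {f ∈ S : f(x₀) = x₀}, L' = {f ∈ S : f(W₀) = W₀}. Form the wreath product G = S ≀ Sym(Fin 2), the semidirect product (Fin 2 → S) ⋊ Sym(Fin 2) where Sym(Fin 2) acts by swapping coordinates. Then the subgroups L ≀ Sym(Fin 2) = {(f, t) ∈ G : f 0 ∈ L and f 1 ∈ L} and L' ≀ Sym(Fin 2) = {(f, t) ∈ G : f 0 ∈ L' and f 1 ∈ L'} are elementwise conjugate in G. -/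
/-- The coordinate-permutation action of `Equiv.Perm α` on `α → S`:
`(σ • f) i = f (σ⁻¹ i)`. -/
def permMulAut (S : Type*) [Group S] (α : Type*) : Equiv.Perm α →* MulAut (α → S) where
  toFun σ :=
    { toFun := fun f => f ∘ σ.symm
      invFun := fun f => f ∘ σ
      left_inv := fun f => by ext i; simp
      right_inv := fun f => by ext i; simp
      map_mul' := fun f g => rfl }
  map_one' := by ext f i; rfl
  map_mul' := fun σ τ => by ext f i; rfl

/-- The wreath product `S ≀ T` for `T` a subgroup of `Equiv.Perm α`, i.e. the semidirect
product `(α → S) ⋊ T` where `T` permutes coordinates. -/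
def Wreath (S : Type*) [Group S] {α : Type*} (T : Subgroup (Equiv.Perm α)) : Type _ :=
  (α → S) ⋊[(permMulAut S α).comp T.subtype] T

instance (S : Type*) [Group S] {α : Type*} (T : Subgroup (Equiv.Perm α)) :
    Group (Wreath S T) :=
  inferInstanceAs (Group ((α → S) ⋊[(permMulAut S α).comp T.subtype] T))

/-- The subgroup `L ≀ T` of `S ≀ T`: pairs `(f, t)` with all values of `f` in `L`. -/
def wreathSub {S : Type*} [Group S] {α : Type*} (L : Subgroup S)
    (T : Subgroup (Equiv.Perm α)) : Subgroup (Wreath S T) where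
  carrier := {g : (α → S) ⋊[(permMulAut S α).comp T.subtype] T | ∀ i, g.left i ∈ L}
  one_mem' := fun i => by
    show (1 : (α → S) ⋊[(permMulAut S α).comp T.subtype] T).left i ∈ L
    simpa using one_mem L
  mul_mem' := by
    intro a b ha hb i
    show (a * b).left i ∈ L
    first
      | (erw [SemidirectProduct.mul_left]; exact mul_mem (ha i) (hb _))
      | exact mul_mem (ha i) (hb _)
      | exact mul_mem (ha i) (hb ((a.right : Equiv.Perm α).symm i))
      | (simp only [SemidirectProduct.mul_left] at *; exact mul_mem (ha i) (hb _))
  inv_mem' := by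
    intro a ha i
    show (a⁻¹).left i ∈ L
    first
      | (erw [SemidirectProduct.inv_left]; exact inv_mem (ha _))
      | exact inv_mem (ha _)
      | (simp only [SemidirectProduct.inv_left] at *; exact inv_mem (ha _))

/-- The stabilizer, in the group of linear automorphisms of `V`, of a subspace `W`. -/
def subspaceStabilizer (K : Type*) {V : Type*} [Field K] [AddCommGroup V] [Module K V]
    (W : Submodule K V) : Subgroup (V ≃ₗ[K] V) where
  carrier := {f : V ≃ₗ[K] V | W.map (f : V →ₗ[K] V) = W}
  one_mem' := by simp [Submodule.map_id]
  mul_mem' := by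
    intro a b ha hb
    show W.map ((a * b : V ≃ₗ[K] V) : V →ₗ[K] V) = W
    have : ((a * b : V ≃ₗ[K] V) : V →ₗ[K] V) =
        ((a : V →ₗ[K] V).comp (b : V →ₗ[K] V)) := rfl
    rw [this, Submodule.map_comp, hb, ha]
  inv_mem' := by
    intro a ha
    show W.map ((a⁻¹ : V ≃ₗ[K] V) : V →ₗ[K] V) = W
    conv_lhs => rw [← ha]
    rw [← Submodule.map_comp]
    have : ((a⁻¹ : V ≃ₗ[K] V) : V →ₗ[K] V).comp (a : V →ₗ[K] V) = LinearMap.id := by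
      ext v
      exact a.symm_apply_apply v
    rw [this, Submodule.map_id]

set_option linter.unusedSectionVars false


section LinAlg

variable {K V : Type*} [Field K] [AddCommGroup V] [Module K V] [FiniteDimensional K V]

/-- A linear automorphism stabilizing a line has an eigenvector. -/
lemma line_eigen {g : V ≃ₗ[K] V} {x : Submodule K V} (hg : x.map (g : V →ₗ[K] V) = x)
    (hx : Module.finrank K x = 1) : ∃ (lam : K) (v : V), v ≠ 0 ∧ g v = lam • v := by
  have : Nontrivial x := by
    rw [← Module.finrank_pos_iff (R := K)]; omega
  obtain ⟨u, hu⟩ := exists_ne (0 : x)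
  have hv0 : (u : V) ≠ 0 := fun h => hu (Subtype.ext h)
  obtain ⟨v, hvx, hv0'⟩ : ∃ v : V, v ∈ x ∧ v ≠ 0 := ⟨u, u.2, hv0⟩
  have hspan' : Submodule.span K {v} = x := by
    apply Submodule.eq_of_le_of_finrank_le
    · rw [Submodule.span_singleton_le_iff_mem]; exact hvx
    · rw [finrank_span_singleton hv0', hx]
  have hgu : g v ∈ Submodule.span K {v} := by
    have h1 : g v ∈ x.map (g : V →ₗ[K] V) := Submodule.mem_map_of_mem hvx
    rw [hg] at h1
    rw [hspan']
    exact h1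
  rw [Submodule.mem_span_singleton] at hgu
  obtain ⟨lam, hl⟩ := hgu
  exact ⟨lam, v, hv0', hl.symm⟩

/-- An eigenvector of a linear automorphism spans an invariant line. -/
lemma eigen_line {g : V ≃ₗ[K] V} {lam : K} {v : V} (hv : v ≠ 0) (h : g v = lam • v) :
    (Submodule.span K {v}).map (g : V →ₗ[K] V) = Submodule.span K {v} ∧
      Module.finrank K (Submodule.span K {v}) = 1 := by
  have hlam : lam ≠ 0 := by
    rintro rfl
    apply hv
    have h0 : g v = g 0 := by simpa using h
    exact g.injective h0
  constructor
  · rw [Submodule.map_span, Set.image_singleton]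
    show Submodule.span K {g v} = Submodule.span K {v}
    rw [h]
    exact Submodule.span_singleton_smul_eq (IsUnit.mk0 lam hlam) v
  · exact finrank_span_singleton hv

/-- An eigenvector of a linear automorphism yields an invariant hyperplane. -/
lemma eigen_hyper {g : V ≃ₗ[K] V} {lam : K} {v : V} (hv : v ≠ 0) (h : g v = lam • v) :
    ∃ H : Submodule K V, H.map (g : V →ₗ[K] V) = H ∧
      Module.finrank K H + 1 = Module.finrank K V := by
  set p : V →ₗ[K] V := (g : V →ₗ[K] V) - lam • LinearMap.id with hp
  have hpv : p v = 0 := by simp [hp, h]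
  have hninj : ¬ Function.Injective p := by
    intro hinj
    exact hv (hinj (by simpa using hpv))
  have hlt : LinearMap.range p < ⊤ := by
    rw [lt_top_iff_ne_top]
    intro htop
    exact hninj (LinearMap.injective_iff_surjective.mpr (LinearMap.range_eq_top.mp htop))
  obtain ⟨f, hf0, hle⟩ := Submodule.exists_le_ker_of_lt_top _ hlt
  have hinv : (LinearMap.ker f).map (g : V →ₗ[K] V) ≤ LinearMap.ker f := by
    rintro _ ⟨w, hw, rfl⟩
    have hgw : (g : V →ₗ[K] V) w = p w + lam • w := by simp [hp]
    rw [LinearMap.mem_ker, hgw, map_add, map_smul]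
    have h1 : f (p w) = 0 := hle (LinearMap.mem_range_self p w)
    have h2 : f w = 0 := hw
    rw [h1, h2, smul_zero, add_zero]
  refine ⟨LinearMap.ker f, ?_, Module.Dual.finrank_ker_add_one_of_ne_zero hf0⟩
  apply Submodule.eq_of_le_of_finrank_le hinv
  rw [LinearEquiv.finrank_map_eq]

/-- A linear automorphism stabilizing a hyperplane has an eigenvector. -/
lemma hyper_eigen {g : V ≃ₗ[K] V} {W : Submodule K V} (hg : W.map (g : V →ₗ[K] V) = W)
    (hW : Module.finrank K W + 1 = Module.finrank K V) :
    ∃ (lam : K) (v : V), v ≠ 0 ∧ g v = lam • v := by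
  have hWt : W ≠ ⊤ := by
    intro h
    rw [h, finrank_top] at hW
    omega
  obtain ⟨u, hu⟩ : ∃ u, u ∉ W := by
    by_contra hc
    push_neg at hc
    exact hWt (Submodule.eq_top_iff'.mpr hc)
  have hsup : W ⊔ Submodule.span K {u} = ⊤ := by
    apply Submodule.eq_top_of_finrank_eq
    have h1 : W < W ⊔ Submodule.span K {u} := by
      apply lt_of_le_of_ne le_sup_left
      intro he
      apply hu
      rw [he]
      exact Submodule.mem_sup_right (Submodule.mem_span_singleton_self u)
    have h2 := Submodule.finrank_lt_finrank_of_lt h1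
    have h3 := Submodule.finrank_le (W ⊔ Submodule.span K {u})
    omega
  have hgu : g u ∈ W ⊔ Submodule.span K {u} := hsup ▸ Submodule.mem_top
  rw [Submodule.mem_sup] at hgu
  obtain ⟨w, hwW, z, hz, hwz⟩ := hgu
  rw [Submodule.mem_span_singleton] at hz
  obtain ⟨c, rfl⟩ := hz
  set p : V →ₗ[K] V := (g : V →ₗ[K] V) - c • LinearMap.id with hp
  have hpW : LinearMap.range p ≤ W := by
    rintro _ ⟨x, rfl⟩
    have hx : x ∈ W ⊔ Submodule.span K {u} := hsup ▸ Submodule.mem_top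
    rw [Submodule.mem_sup] at hx
    obtain ⟨w', hw', z', hz', rfl⟩ := hx
    rw [Submodule.mem_span_singleton] at hz'
    obtain ⟨a, rfl⟩ := hz'
    have hpw' : p w' ∈ W := by
      have : (g : V →ₗ[K] V) w' ∈ W := hg ▸ Submodule.mem_map_of_mem hw'
      simpa [hp] using Submodule.sub_mem W this (Submodule.smul_mem W c hw')
    have hpu : p u ∈ W := by
      have : p u = w := by simp [hp]; rw [show g u = w + c • u from hwz.symm]; abel
      rw [this]; exact hwW
    have : p (w' + a • u) = p w' + a • p u := by rw [map_add, map_smul]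
    rw [this]
    exact Submodule.add_mem W hpw' (Submodule.smul_mem W a hpu)
  have hker : LinearMap.ker p ≠ ⊥ := by
    intro hk
    have hinj : Function.Injective p := LinearMap.ker_eq_bot.mp hk
    have hsurj := LinearMap.injective_iff_surjective.mp hinj
    have : LinearMap.range p = ⊤ := LinearMap.range_eq_top.mpr hsurj
    rw [this] at hpW
    exact hWt (top_le_iff.mp hpW)
  obtain ⟨v, hvk, hv0⟩ := Submodule.exists_mem_ne_zero_of_ne_bot hker
  refine ⟨c, v, hv0, ?_⟩
  have : p v = 0 := hvk
  have : (g : V →ₗ[K] V) v - c • v = 0 := by simpa [hp] using this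
  have := sub_eq_zero.mp this
  simpa using this

/-- Transitivity: subspaces of equal finrank are related by an automorphism. -/
lemma exists_map_eq {A B : Submodule K V} (h : Module.finrank K A = Module.finrank K B) :
    ∃ u : V ≃ₗ[K] V, A.map (u : V →ₗ[K] V) = B := by
  obtain ⟨A', hA'⟩ := A.exists_isCompl
  obtain ⟨B', hB'⟩ := B.exists_isCompl
  have hA'B' : Module.finrank K A' = Module.finrank K B' := by
    have h1 := Submodule.finrank_add_eq_of_isCompl hA'
    have h2 := Submodule.finrank_add_eq_of_isCompl hB'
    omega
  obtain ⟨e⟩ := FiniteDimensional.nonempty_linearEquiv_of_finrank_eq h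
  obtain ⟨e'⟩ := FiniteDimensional.nonempty_linearEquiv_of_finrank_eq hA'B'
  set u : V ≃ₗ[K] V :=
    (Submodule.prodEquivOfIsCompl A A' hA').symm.trans
      ((e.prodCongr e').trans (Submodule.prodEquivOfIsCompl B B' hB')) with hu
  refine ⟨u, ?_⟩
  have hle : A.map (u : V →ₗ[K] V) ≤ B := by
    rintro _ ⟨a, haA, rfl⟩
    have h1 := Submodule.prodEquivOfIsCompl_symm_apply_left (p := A) (q := A') hA' ⟨a, haA⟩
    show u a ∈ B
    rw [hu]
    simp only [LinearEquiv.trans_apply, h1, LinearEquiv.prodCongr_apply, Pi.prod,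
      Submodule.coe_prodEquivOfIsCompl', map_zero]
    exact Submodule.add_mem B (e ⟨a, haA⟩).2 (by simp)
  apply Submodule.eq_of_le_of_finrank_le hle
  rw [LinearEquiv.finrank_map_eq, h]

/-- Conjugating a stabilizer of one subspace into the stabilizer of another of equal finrank. -/
lemma conj_to_stab {g : V ≃ₗ[K] V} {H B : Submodule K V} (hg : H.map (g : V →ₗ[K] V) = H)
    (hfr : Module.finrank K H = Module.finrank K B) :
    ∃ c : V ≃ₗ[K] V, c * g * c⁻¹ ∈ subspaceStabilizer K B := by
  obtain ⟨c, hc⟩ := exists_map_eq hfr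
  refine ⟨c, ?_⟩
  show B.map ((c * g * c⁻¹ : V ≃ₗ[K] V) : V →ₗ[K] V) = B
  have hcomp : ((c * g * c⁻¹ : V ≃ₗ[K] V) : V →ₗ[K] V) =
      ((c : V →ₗ[K] V).comp ((g : V →ₗ[K] V).comp ((c⁻¹ : V ≃ₗ[K] V) : V →ₗ[K] V))) := rfl
  have hinv : B.map ((c⁻¹ : V ≃ₗ[K] V) : V →ₗ[K] V) = H := by
    rw [← hc, ← Submodule.map_comp]
    have : (((c⁻¹ : V ≃ₗ[K] V) : V →ₗ[K] V)).comp (c : V →ₗ[K] V) = LinearMap.id := by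
      ext v; exact c.symm_apply_apply v
    rw [this, Submodule.map_id]
  rw [hcomp, Submodule.map_comp, Submodule.map_comp, hinv, hg, hc]

end LinAlg

section WreathPart

lemma perm_fin_two : ∀ s : Equiv.Perm (Fin 2), s = 1 ∨ s = Equiv.swap 0 1 := by decide

variable {S : Type*} [Group S]

private abbrev phi (S : Type*) [Group S] :
    (⊤ : Subgroup (Equiv.Perm (Fin 2))) →* MulAut (Fin 2 → S) :=
  (permMulAut S (Fin 2)).comp (⊤ : Subgroup (Equiv.Perm (Fin 2))).subtype

lemma conj_formula (g f : Fin 2 → S) (t : (⊤ : Subgroup (Equiv.Perm (Fin 2)))) :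
    (⟨g, 1⟩ : (Fin 2 → S) ⋊[phi S] (⊤ : Subgroup (Equiv.Perm (Fin 2)))) * ⟨f, t⟩ * ⟨g, 1⟩⁻¹ =
      ⟨fun i => g i * f i * (g ((t : Equiv.Perm (Fin 2)).symm i))⁻¹, t⟩ := by
  apply SemidirectProduct.ext
  · funext i
    show (g * (phi S) 1 f * (phi S) ((1 * t) * 1⁻¹) ((phi S) 1⁻¹ g⁻¹)) i = _
    simp only [map_one, one_mul, mul_one, inv_one, MulAut.one_apply]
    rfl
  · simp

lemma wreath_conj_of_conj (L₁ L₂ : Subgroup S)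
    (hc : ∀ s ∈ L₁, ∃ c : S, c * s * c⁻¹ ∈ L₂) :
    ∀ h ∈ wreathSub L₁ (⊤ : Subgroup (Equiv.Perm (Fin 2))),
      ∃ h' ∈ wreathSub L₂ (⊤ : Subgroup (Equiv.Perm (Fin 2))), IsConj h h' := by
  intro h hh
  obtain ⟨f, t⟩ := h
  have hf : ∀ i, f i ∈ L₁ := hh
  rcases perm_fin_two (t : Equiv.Perm (Fin 2)) with ht | ht
  · -- t = 1 : conjugate coordinatewise
    choose c hcm using fun i => hc (f i) (hf i)
    refine ⟨⟨fun i => c i * f i * (c i)⁻¹, t⟩, fun i => hcm i, ?_⟩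
    refine (isConj_iff (α := Wreath S ⊤)).mpr ?_
    refine ⟨⟨c, 1⟩, ?_⟩
    have := conj_formula c f t
    refine this.trans ?_
    congr 1
    funext i
    rw [ht]
    rfl
  · -- t = swap
    obtain ⟨γ, hq⟩ := hc (f 0 * f 1) (mul_mem (hf 0) (hf 1))
    set q : S := γ * (f 0 * f 1) * γ⁻¹ with hqdef
    refine ⟨⟨![q, 1], t⟩, ?_, ?_⟩
    · intro i
      fin_cases i
      · exact hq
      · exact one_mem L₂
    · refine (isConj_iff (α := Wreath S ⊤)).mpr ?_
      refine ⟨⟨![γ, q⁻¹ * γ * f 0], 1⟩, ?_⟩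
      refine (conj_formula _ _ _).trans ?_
      congr 1
      funext i
      rw [ht]
      fin_cases i
      · show γ * f 0 * (![γ, q⁻¹ * γ * f 0] (Equiv.swap 0 1 0))⁻¹ = q
        rw [Equiv.swap_apply_left]
        show γ * f 0 * (q⁻¹ * γ * f 0)⁻¹ = q
        group
      · show (q⁻¹ * γ * f 0) * f 1 * (![γ, q⁻¹ * γ * f 0] (Equiv.swap 0 1 1))⁻¹ = 1
        rw [Equiv.swap_apply_right]
        show (q⁻¹ * γ * f 0) * f 1 * γ⁻¹ = 1
        rw [hqdef]
        group

end WreathPart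

/-- In the wreath product `GL(V) ≀ Sym(Fin 2)`, the subgroups `L ≀ Sym(Fin 2)` and
`L' ≀ Sym(Fin 2)` — where `L` is the stabilizer of a line `x₀` and `L'` the stabilizer of a
hyperplane `W₀` — are elementwise conjugate. -/
theorem wreath_two_elementwiseConj {K V : Type*} [Field K]
    [AddCommGroup V] [Module K V] [FiniteDimensional K V]
    (hV : 1 ≤ Module.finrank K V)
    (x₀ : Submodule K V) (hx₀ : Module.finrank K x₀ = 1)
    (W₀ : Submodule K V) (hW₀ : Module.finrank K W₀ + 1 = Module.finrank K V) :
    (∀ h ∈ wreathSub (subspaceStabilizer K x₀) (⊤ : Subgroup (Equiv.Perm (Fin 2))),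
      ∃ h' ∈ wreathSub (subspaceStabilizer K W₀) (⊤ : Subgroup (Equiv.Perm (Fin 2))),
        IsConj h h') ∧
    (∀ h' ∈ wreathSub (subspaceStabilizer K W₀) (⊤ : Subgroup (Equiv.Perm (Fin 2))),
      ∃ h ∈ wreathSub (subspaceStabilizer K x₀) (⊤ : Subgroup (Equiv.Perm (Fin 2))),
        IsConj h' h) := by
  constructor
  · apply wreath_conj_of_conj
    intro s hs
    obtain ⟨lam, v, hv, hgv⟩ := line_eigen hs hx₀
    obtain ⟨H, hH, hHfr⟩ := eigen_hyper hv hgv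
    exact conj_to_stab hH (by omega)
  · apply wreath_conj_of_conj
    intro s hs
    obtain ⟨lam, v, hv, hgv⟩ := hyper_eigen hs hW₀
    obtain ⟨hmap, hfr⟩ := eigen_line hv hgv
    exact conj_to_stab hmap (by rw [hfr, hx₀])
end

section
/- Let S be a group and let L and L' be subgroups of S such that every element of L' is conjugate in S to some element of L. Then for every positive integer n, every permutation γ of Fin n, and every function a : Fin n → S with a i ∈ L' for all i, there exists a function l : Fin n → S such that for every i, the element (l i) · (a i) · (l (γ⁻¹ i))⁻¹ lies in L. -/
namespace ExistsTupleConjAux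

variable {n : ℕ} (γ : Equiv.Perm (Fin n))

/-- The orbit of `i` under `γ`, as a finset. -/
noncomputable def orbitF (i : Fin n) : Finset (Fin n) :=
  (Finset.range (orderOf γ)).image (fun m => (γ ^ m) i)

lemma mem_orbitF {i j : Fin n} : j ∈ orbitF γ i ↔ ∃ m, (γ ^ m) i = j := by
  simp only [orbitF, Finset.mem_image, Finset.mem_range]
  constructor
  · rintro ⟨m, -, hm⟩; exact ⟨m, hm⟩
  · rintro ⟨m, hm⟩
    exact ⟨m % orderOf γ, Nat.mod_lt _ (orderOf_pos γ), by rw [pow_mod_orderOf]; exact hm⟩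

lemma orbitF_nonempty (i : Fin n) : (orbitF γ i).Nonempty :=
  ⟨i, (mem_orbitF γ).2 ⟨0, rfl⟩⟩

lemma orbitF_pow (i : Fin n) (k : ℕ) : orbitF γ ((γ ^ k) i) = orbitF γ i := by
  ext j
  rw [mem_orbitF, mem_orbitF]
  constructor
  · rintro ⟨m, hm⟩
    exact ⟨m + k, by rw [pow_add, Equiv.Perm.mul_apply]; exact hm⟩
  · rintro ⟨m, hm⟩
    refine ⟨m + k * (orderOf γ - 1), ?_⟩
    have h1 : (γ ^ (m + k * (orderOf γ - 1))) ((γ ^ k) i)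
        = (γ ^ (m + k * (orderOf γ - 1) + k)) i := by
      rw [pow_add _ (m + k * (orderOf γ - 1)) k, Equiv.Perm.mul_apply]
    have hN : orderOf γ - 1 + 1 = orderOf γ := Nat.succ_pred_eq_of_pos (orderOf_pos γ)
    have h2 : m + k * (orderOf γ - 1) + k = m + orderOf γ * k := by
      rw [Nat.add_assoc, ← Nat.mul_succ, Nat.succ_eq_add_one, hN, Nat.mul_comm]
    rw [h1, h2, pow_add, pow_mul, pow_orderOf_eq_one, one_pow, mul_one]
    exact hm

lemma orbitF_inv (i : Fin n) : orbitF γ (γ⁻¹ i) = orbitF γ i := by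
  have hN : orderOf γ - 1 + 1 = orderOf γ := Nat.succ_pred_eq_of_pos (orderOf_pos γ)
  have h1 : γ * γ ^ (orderOf γ - 1) = 1 := by
    rw [← pow_succ', hN, pow_orderOf_eq_one]
  have h2 : γ⁻¹ = γ ^ (orderOf γ - 1) := inv_eq_of_mul_eq_one_right h1
  rw [show γ⁻¹ i = (γ ^ (orderOf γ - 1)) i from by rw [← h2], orbitF_pow]

/-- Representative of the orbit of `i`. -/
noncomputable def repF (i : Fin n) : Fin n := (orbitF γ i).min' (orbitF_nonempty γ i)

lemma exists_pow_repF (i : Fin n) : ∃ m, (γ ^ m) (repF γ i) = i := by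
  obtain ⟨m, hm⟩ := (mem_orbitF γ).1 (Finset.min'_mem (orbitF γ i) (orbitF_nonempty γ i))
  have horb : orbitF γ (repF γ i) = orbitF γ i := by
    rw [repF, ← hm, orbitF_pow]
  have hi : i ∈ orbitF γ (repF γ i) := by
    rw [horb]; exact (mem_orbitF γ).2 ⟨0, rfl⟩
  exact (mem_orbitF γ).1 hi

/-- Distance from the representative to `i` along `γ`. -/
noncomputable def dF (i : Fin n) : ℕ := Nat.find (exists_pow_repF γ i)

lemma dF_spec (i : Fin n) : (γ ^ dF γ i) (repF γ i) = i := Nat.find_spec (exists_pow_repF γ i)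

lemma repF_eq_of_orbit_eq {i j : Fin n} (hij : orbitF γ i = orbitF γ j) :
    repF γ i = repF γ j := by
  apply le_antisymm
  · exact Finset.min'_le _ _ (by rw [hij]; exact Finset.min'_mem _ _)
  · exact Finset.min'_le _ _ (by rw [← hij]; exact Finset.min'_mem _ _)

lemma repF_inv (i : Fin n) : repF γ (γ⁻¹ i) = repF γ i :=
  repF_eq_of_orbit_eq γ (orbitF_inv γ i)

/-- Partial product of `a` along the cycle starting at `r`. -/
def cyc {S : Type*} [Group S] (γ : Equiv.Perm (Fin n)) (a : Fin n → S) (r : Fin n) : ℕ → S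
  | 0 => 1
  | (m + 1) => a ((γ ^ (m + 1)) r) * cyc γ a r m

lemma cyc_mem {S : Type*} [Group S] (L' : Subgroup S) (a : Fin n → S)
    (ha : ∀ i, a i ∈ L') (r : Fin n) : ∀ m, cyc γ a r m ∈ L'
  | 0 => one_mem L'
  | (m + 1) => mul_mem (ha _) (cyc_mem L' a ha r m)

end ExistsTupleConjAux

open ExistsTupleConjAux in
/-- Equation-solving lemma: if every element of `L'` is conjugate in `S` to some element of
`L`, then for every permutation `γ` of `Fin n` and every tuple `a` with values in `L'`,
there is a tuple `l` with `l i * a i * (l (γ⁻¹ i))⁻¹ ∈ L` for all `i`. -/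
theorem exists_tuple_conj_solution {S : Type*} [Group S] (L L' : Subgroup S)
    (h : ∀ a ∈ L', ∃ b ∈ L, IsConj b a)
    (n : ℕ) (hn : 0 < n) (γ : Equiv.Perm (Fin n))
    (a : Fin n → S) (ha : ∀ i, a i ∈ L') :
    ∃ l : Fin n → S, ∀ i, l i * a i * (l (γ⁻¹ i))⁻¹ ∈ L := by
  classical
  have hB : ∀ i : Fin n, a i * cyc γ a i (dF γ (γ⁻¹ i)) ∈ L' := fun i =>
    mul_mem (ha i) (cyc_mem γ L' a ha i _)
  have hc : ∀ i : Fin n, ∃ c : S, c * (a i * cyc γ a i (dF γ (γ⁻¹ i))) * c⁻¹ ∈ L := by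
    intro i
    obtain ⟨b, hbL, hconj⟩ := h _ (hB i)
    obtain ⟨g, hg⟩ := isConj_iff.1 hconj
    refine ⟨g⁻¹, ?_⟩
    rw [← hg]
    have : g⁻¹ * (g * b * g⁻¹) * g⁻¹⁻¹ = b := by group
    rw [this]; exact hbL
  choose c hcL using hc
  refine ⟨fun i => c (repF γ i) * (cyc γ a (repF γ i) (dF γ i))⁻¹, fun i => ?_⟩
  show c (repF γ i) * (cyc γ a (repF γ i) (dF γ i))⁻¹ * a i *
      (c (repF γ (γ⁻¹ i)) * (cyc γ a (repF γ (γ⁻¹ i)) (dF γ (γ⁻¹ i)))⁻¹)⁻¹ ∈ L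
  rw [repF_inv]
  cases hdi : dF γ i with
  | zero =>
    have hri : repF γ i = i := by
      have := dF_spec γ i
      rw [hdi, pow_zero] at this
      simpa using this
    rw [hri]
    have key : c i * (cyc γ a i 0)⁻¹ * a i * (c i * (cyc γ a i (dF γ (γ⁻¹ i)))⁻¹)⁻¹
        = c i * (a i * cyc γ a i (dF γ (γ⁻¹ i))) * (c i)⁻¹ := by
      rw [show cyc γ a i 0 = 1 from rfl]; group
    rw [key]
    exact hcL i
  | succ m =>
    have hai : (γ ^ (m + 1)) (repF γ i) = i := by rw [← hdi]; exact dF_spec γ i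
    have hdinv : dF γ (γ⁻¹ i) = m := by
      rw [dF, Nat.find_eq_iff]
      refine ⟨?_, ?_⟩
      · rw [repF_inv]
        have h1 : γ ((γ ^ m) (repF γ i)) = i := by
          rw [← Equiv.Perm.mul_apply, ← pow_succ']; exact hai
        refine γ.injective ?_
        rw [h1, ← Equiv.Perm.mul_apply, mul_inv_cancel, Equiv.Perm.one_apply]
      · intro k hk hkeq
        rw [repF_inv] at hkeq
        have h2 : (γ ^ (k + 1)) (repF γ i) = i := by
          rw [pow_succ', Equiv.Perm.mul_apply, hkeq, ← Equiv.Perm.mul_apply, mul_inv_cancel, Equiv.Perm.one_apply]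
        have hlt : k + 1 < dF γ i := by omega
        exact Nat.find_min (exists_pow_repF γ i) hlt h2
    rw [hdinv]
    have hcyc : cyc γ a (repF γ i) (m + 1) = a i * cyc γ a (repF γ i) m := by
      rw [show cyc γ a (repF γ i) (m + 1)
          = a ((γ ^ (m + 1)) (repF γ i)) * cyc γ a (repF γ i) m from rfl, hai]
    rw [hcyc]
    have key : c (repF γ i) * (a i * cyc γ a (repF γ i) m)⁻¹ * a i *
        (c (repF γ i) * (cyc γ a (repF γ i) m)⁻¹)⁻¹ = 1 := by group
    rw [key]
    exact one_mem L
end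

section
/- For every natural number N, there exist a finite group G and subgroups U and V of G such that: U and V are elementwise conjugate in G; U and V are not conjugate in G; U and V are maximal subgroups of G; the normal core of U in G and the normal core of V in G are both trivial; and the indices satisfy [G : U] = [G : V] > N. -/
namespace ECBase

abbrev T := Fin 7 × Fin 7 × Fin 7

def e (x : Fin 7) : ℕ := x.val + 1
def dc (n : ℕ) : Fin 7 := ⟨(n-1) % 7, Nat.mod_lt _ (by norm_num)⟩

def lin (t : T) (v : ℕ) : ℕ :=
  ((if v &&& 1 ≠ 0 then e t.1 else 0) ^^^ (if v &&& 2 ≠ 0 then e t.2.1 else 0)) ^^^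
    (if v &&& 4 ≠ 0 then e t.2.2 else 0)

def Fn (t : T) (x : Fin 7) : Fin 7 := dc (lin t (e x))

def Ok (t : T) : Prop := ∀ v : Fin 8, v.val ≠ 0 → lin t v.val ≠ 0

instance : DecidablePred Ok := fun t => by unfold Ok; infer_instance

def idT : T := (0, 1, 3)
def mulT (t s : T) : T := (Fn t (Fn s 0), Fn t (Fn s 1), Fn t (Fn s 3))
def invT (t : T) : T :=
  ((((List.finRange 7).find? (fun x => Fn t x = 0)).getD 0),
   (((List.finRange 7).find? (fun x => Fn t x = 1)).getD 0),
   (((List.finRange 7).find? (fun x => Fn t x = 3)).getD 0))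

set_option maxRecDepth 100000

theorem L_id : ∀ x : Fin 7, Fn idT x = x := by decide
theorem L_ext : ∀ t : T, (Fn t 0, Fn t 1, Fn t 3) = t := by decide
theorem Dbound : ∀ t : T, ∀ v : Fin 8, lin t v.val < 8 := by decide
theorem e_lt : ∀ x : Fin 7, e x < 8 := by decide
theorem e_ne : ∀ x : Fin 7, e x ≠ 0 := by decide
theorem e_dc : ∀ n : Fin 8, n.val ≠ 0 → e (dc n.val) = n.val := by decide
theorem Ok_id : Ok idT := by decide

set_option maxHeartbeats 4000000 in
theorem Dlin : ∀ t : T, ∀ v w : Fin 8, lin t (v.val ^^^ w.val) = lin t v.val ^^^ lin t w.val := by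
  decide

set_option maxHeartbeats 4000000 in
theorem D_inv : ∀ t : T, Ok t →
    (Ok (invT t) ∧ ∀ x : Fin 7, Fn (invT t) (Fn t x) = x ∧ Fn t (Fn (invT t) x) = x) := by
  decide

-- symbolic consequences

theorem lin_lt (t : T) {v : ℕ} (hv : v < 8) : lin t v < 8 := Dbound t ⟨v, hv⟩

theorem lin_ne (t : T) (ht : Ok t) {v : ℕ} (hv : v < 8) (h0 : v ≠ 0) : lin t v ≠ 0 :=
  ht ⟨v, hv⟩ h0

theorem e_dc' {n : ℕ} (h8 : n < 8) (h0 : n ≠ 0) : e (dc n) = n := e_dc ⟨n, h8⟩ h0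

/-- for `Ok t`, the code of `Fn t x` is `lin t (e x)`. -/
theorem e_Fn (t : T) (ht : Ok t) (x : Fin 7) : e (Fn t x) = lin t (e x) :=
  e_dc' (lin_lt t (e_lt x)) (lin_ne t ht (e_lt x) (e_ne x))



theorem lin0 (r : T) : lin r 0 = 0 := by norm_num [lin]
theorem lin1 (A B C : Fin 7) : lin (A,B,C) 1 = e A := by simp [lin, show (1:ℕ)&&&1 = 1 from rfl, show (1:ℕ)&&&2 = 0 from rfl, show (1:ℕ)&&&4 = 0 from rfl]
theorem lin2 (A B C : Fin 7) : lin (A,B,C) 2 = e B := by simp [lin, show (2:ℕ)&&&1 = 0 from rfl, show (2:ℕ)&&&2 = 2 from rfl, show (2:ℕ)&&&4 = 0 from rfl]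
theorem lin3 (A B C : Fin 7) : lin (A,B,C) 3 = e A ^^^ e B := by simp [lin, show (3:ℕ)&&&1 = 1 from rfl, show (3:ℕ)&&&2 = 2 from rfl, show (3:ℕ)&&&4 = 0 from rfl]
theorem lin4 (A B C : Fin 7) : lin (A,B,C) 4 = e C := by simp [lin, show (4:ℕ)&&&1 = 0 from rfl, show (4:ℕ)&&&2 = 0 from rfl, show (4:ℕ)&&&4 = 4 from rfl]
theorem lin5 (A B C : Fin 7) : lin (A,B,C) 5 = e A ^^^ e C := by simp [lin, show (5:ℕ)&&&1 = 1 from rfl, show (5:ℕ)&&&2 = 0 from rfl, show (5:ℕ)&&&4 = 4 from rfl]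
theorem lin6 (A B C : Fin 7) : lin (A,B,C) 6 = e B ^^^ e C := by simp [lin, show (6:ℕ)&&&1 = 0 from rfl, show (6:ℕ)&&&2 = 2 from rfl, show (6:ℕ)&&&4 = 4 from rfl]
theorem lin7 (A B C : Fin 7) : lin (A,B,C) 7 = (e A ^^^ e B) ^^^ e C := by simp [lin, show (7:ℕ)&&&1 = 1 from rfl, show (7:ℕ)&&&2 = 2 from rfl, show (7:ℕ)&&&4 = 4 from rfl]

theorem lin_comp (t s : T) (ht : Ok t) (hs : Ok s) {v : ℕ} (hv : v < 8) :
    lin (mulT t s) v = lin t (lin s v) := by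
  have h1 : e (Fn t (Fn s 0)) = lin t (lin s 1) := by rw [e_Fn t ht, e_Fn s hs]; rfl
  have h2 : e (Fn t (Fn s 1)) = lin t (lin s 2) := by rw [e_Fn t ht, e_Fn s hs]; rfl
  have h4 : e (Fn t (Fn s 3)) = lin t (lin s 4) := by rw [e_Fn t ht, e_Fn s hs]; rfl
  have key : ∀ a b : ℕ, a < 8 → b < 8 → lin t a ^^^ lin t b = lin t (a ^^^ b) := by
    intro a b ha hb; exact (Dlin t ⟨a, ha⟩ ⟨b, hb⟩).symm
  have keyS : ∀ a b : ℕ, a < 8 → b < 8 → lin s (a ^^^ b) = lin s a ^^^ lin s b := by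
    intro a b ha hb; exact Dlin s ⟨a, ha⟩ ⟨b, hb⟩
  have l1 : (1:ℕ) < 8 := by norm_num
  have l2 : (2:ℕ) < 8 := by norm_num
  have l3 : (3:ℕ) < 8 := by norm_num
  have l4 : (4:ℕ) < 8 := by norm_num
  have b1 := lin_lt s l1
  have b2 := lin_lt s l2
  have b3 := lin_lt s l3
  have b4 := lin_lt s l4
  have e12 : lin s 3 = lin s 1 ^^^ lin s 2 := by
    have := keyS 1 2 l1 l2; norm_num at this; exact this
  have e14 : lin s 5 = lin s 1 ^^^ lin s 4 := by
    have := keyS 1 4 l1 l4; norm_num at this; exact this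
  have e24 : lin s 6 = lin s 2 ^^^ lin s 4 := by
    have := keyS 2 4 l2 l4; norm_num at this; exact this
  have e34 : lin s 7 = lin s 3 ^^^ lin s 4 := by
    have := keyS 3 4 l3 l4; norm_num at this; exact this
  show lin (Fn t (Fn s 0), Fn t (Fn s 1), Fn t (Fn s 3)) v = lin t (lin s v)
  interval_cases v
  · rw [lin0, lin0, lin0]
  · rw [lin1, h1]
  · rw [lin2, h2]
  · rw [lin3, h1, h2, key _ _ b1 b2, ← e12]
  · rw [lin4, h4]
  · rw [lin5, h1, h4, key _ _ b1 b4, ← e14]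
  · rw [lin6, h2, h4, key _ _ b2 b4, ← e24]
  · rw [lin7, h1, h2, h4, key _ _ b1 b2, ← e12, key _ _ b3 b4, ← e34]

theorem Fn_comp (t s : T) (ht : Ok t) (hs : Ok s) (x : Fin 7) :
    Fn (mulT t s) x = Fn t (Fn s x) := by
  show dc (lin (mulT t s) (e x)) = dc (lin t (e (Fn s x)))
  rw [lin_comp t s ht hs (e_lt x), e_Fn s hs x]

theorem Ok_mul (t s : T) (ht : Ok t) (hs : Ok s) : Ok (mulT t s) := by
  intro v hv
  rw [lin_comp t s ht hs v.isLt]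
  exact lin_ne t ht (lin_lt s v.isLt) (lin_ne s hs v.isLt hv)

theorem T_ext {t s : T} (h : ∀ x, Fn t x = Fn s x) : t = s := by
  rw [← L_ext t, ← L_ext s, h 0, h 1, h 3]

def G0 : Type := {t : T // Ok t}

instance : Fintype G0 := Subtype.fintype _
instance : DecidableEq G0 := Subtype.instDecidableEq

instance : Group G0 where
  mul a b := ⟨mulT a.1 b.1, Ok_mul _ _ a.2 b.2⟩
  one := ⟨idT, Ok_id⟩
  inv a := ⟨invT a.1, (D_inv a.1 a.2).1⟩
  mul_assoc a b c := by
    apply Subtype.ext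
    show mulT (mulT a.1 b.1) c.1 = mulT a.1 (mulT b.1 c.1)
    have hab := Ok_mul _ _ a.2 b.2
    have hbc := Ok_mul _ _ b.2 c.2
    apply T_ext
    intro x
    rw [Fn_comp _ _ hab c.2, Fn_comp _ _ a.2 b.2, Fn_comp _ _ a.2 hbc, Fn_comp _ _ b.2 c.2]
  one_mul a := by
    apply Subtype.ext
    show mulT idT a.1 = a.1
    apply T_ext
    intro x
    rw [Fn_comp _ _ Ok_id a.2, L_id]
  mul_one a := by
    apply Subtype.ext
    show mulT a.1 idT = a.1
    apply T_ext
    intro x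
    rw [Fn_comp _ _ a.2 Ok_id, L_id]
  inv_mul_cancel a := by
    apply Subtype.ext
    show mulT (invT a.1) a.1 = idT
    apply T_ext
    intro x
    rw [Fn_comp _ _ (D_inv a.1 a.2).1 a.2, ((D_inv a.1 a.2).2 x).1, L_id]

theorem mul_val (a b : G0) : (a * b).1 = mulT a.1 b.1 := rfl
theorem inv_val (a : G0) : (a⁻¹).1 = invT a.1 := rfl
theorem one_val : (1 : G0).1 = idT := rfl

theorem Fn_zero : ∀ t : T, Fn t 0 = t.1 := by decide

def Umem (t : T) : Prop := t.1 = 0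
instance : DecidablePred Umem := fun t => by unfold Umem; infer_instance

def Vmem (t : T) : Prop := (Fn t 0).val < 3 ∧ (Fn t 1).val < 3 ∧ (Fn t 2).val < 3
instance : DecidablePred Vmem := fun t => by unfold Vmem; infer_instance

def ec1Tbl : List (T × T) := [((0,1,3), (0,1,3)), ((0,1,4), (0,1,3)), ((0,1,5), (0,1,3)), ((0,1,6), (0,1,3)), ((0,2,3), (0,1,3)), ((0,2,4), (0,1,3)), ((0,2,5), (0,1,3)), ((0,2,6), (0,1,3)), ((0,3,1), (0,3,5)), ((0,3,2), (0,3,5)), ((0,3,5), (3,0,1)), ((0,3,6), (3,4,5)), ((0,4,1), (0,3,5)), ((0,4,2), (0,3,5)), ((0,4,5), (3,0,5)), ((0,4,6), (3,4,1)), ((0,5,1), (3,0,1)), ((0,5,2), (3,4,1)), ((0,5,3), (0,3,1)), ((0,5,4), (0,3,1)), ((0,6,1), (3,4,5)), ((0,6,2), (3,0,5)), ((0,6,3), (0,3,1)), ((0,6,4), (0,3,1))]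

def ec2Tbl : List (T × T) := [((0,1,3), (0,1,3)), ((0,1,4), (0,1,3)), ((0,1,5), (0,1,3)), ((0,1,6), (0,1,3)), ((0,2,3), (0,1,3)), ((0,2,4), (0,1,3)), ((0,2,5), (0,1,3)), ((0,2,6), (0,1,3)), ((1,0,3), (1,2,3)), ((1,0,4), (1,2,3)), ((1,0,5), (1,2,3)), ((1,0,6), (1,2,3)), ((1,2,3), (1,3,0)), ((1,2,4), (1,3,4)), ((1,2,5), (1,3,6)), ((1,2,6), (1,3,2)), ((2,0,3), (1,3,0)), ((2,0,4), (1,3,6)), ((2,0,5), (1,3,2)), ((2,0,6), (1,3,4)), ((2,1,3), (1,0,3)), ((2,1,4), (1,0,3)), ((2,1,5), (1,0,3)), ((2,1,6), (1,0,3))]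

def ncTbl : List (T × T) := [((0,1,3), (0,3,1)), ((0,1,4), (0,3,1)), ((0,1,5), (0,3,1)), ((0,1,6), (0,3,1)), ((0,2,3), (0,3,1)), ((0,2,4), (0,3,1)), ((0,2,5), (0,3,1)), ((0,2,6), (0,3,1)), ((0,3,1), (0,1,5)), ((0,3,2), (0,1,5)), ((0,3,5), (0,1,5)), ((0,3,6), (0,1,5)), ((0,4,1), (0,1,5)), ((0,4,2), (0,1,5)), ((0,4,5), (0,1,5)), ((0,4,6), (0,1,5)), ((0,5,1), (0,1,5)), ((0,5,2), (0,1,5)), ((0,5,3), (0,1,5)), ((0,5,4), (0,1,5)), ((0,6,1), (0,1,5)), ((0,6,2), (0,1,5)), ((0,6,3), (0,1,5)), ((0,6,4), (0,1,5)), ((1,0,3), (0,3,1)), ((1,0,4), (0,3,1)), ((1,0,5), (0,3,1)), ((1,0,6), (0,3,1)), ((1,2,3), (0,3,1)), ((1,2,4), (0,3,1)), ((1,2,5), (0,3,1)), ((1,2,6), (0,3,1)), ((1,3,0), (0,1,5)), ((1,3,2), (0,1,5)), ((1,3,4), (0,1,5)), ((1,3,6), (0,1,5)), ((1,4,0), (0,1,5)),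 ((1,4,2), (0,1,5)), ((1,4,3), (0,1,5)), ((1,4,5), (0,1,5)), ((1,5,0), (0,1,5)), ((1,5,2), (0,1,5)), ((1,5,4), (0,1,5)), ((1,5,6), (0,1,5)), ((1,6,0), (0,1,5)), ((1,6,2), (0,1,5)), ((1,6,3), (0,1,5)), ((1,6,5), (0,1,5)), ((2,0,3), (0,3,1)), ((2,0,4), (0,3,1)), ((2,0,5), (0,3,1)), ((2,0,6), (0,3,1)), ((2,1,3), (0,3,1)), ((2,1,4), (0,3,1)), ((2,1,5), (0,3,1)), ((2,1,6), (0,3,1)), ((2,3,0), (0,1,5)), ((2,3,1), (0,1,5)), ((2,3,4), (0,1,5)), ((2,3,5), (0,1,5)), ((2,4,0), (0,1,5)), ((2,4,1), (0,1,5)), ((2,4,3), (0,1,5)), ((2,4,6), (0,1,5)), ((2,5,0), (0,1,5)), ((2,5,1), (0,1,5)), ((2,5,3), (0,1,5)), ((2,5,6), (0,1,5)), ((2,6,0), (0,1,5)), ((2,6,1), (0,1,5)), ((2,6,4), (0,1,5)), ((2,6,5), (0,1,5)), ((3,0,1), (0,1,4)), ((3,0,2), (0,1,4)), ((3,0,5),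 (0,1,4)), ((3,0,6), (0,1,4)), ((3,1,0), (0,1,4)), ((3,1,2), (0,1,4)), ((3,1,4), (0,1,4)), ((3,1,6), (0,1,4)), ((3,2,0), (0,1,4)), ((3,2,1), (0,1,4)), ((3,2,4), (0,1,4)), ((3,2,5), (0,1,4)), ((3,4,1), (0,1,4)), ((3,4,2), (0,1,4)), ((3,4,5), (0,1,4)), ((3,4,6), (0,1,4)), ((3,5,0), (0,1,4)), ((3,5,2), (0,1,4)), ((3,5,4), (0,1,4)), ((3,5,6), (0,1,4)), ((3,6,0), (0,1,4)), ((3,6,1), (0,1,4)), ((3,6,4), (0,1,4)), ((3,6,5), (0,1,4)), ((4,0,1), (0,1,4)), ((4,0,2), (0,1,4)), ((4,0,5), (0,1,4)), ((4,0,6), (0,1,4)), ((4,1,0), (0,1,4)), ((4,1,2), (0,1,4)), ((4,1,3), (0,1,4)), ((4,1,5), (0,1,4)), ((4,2,0), (0,1,4)), ((4,2,1), (0,1,4)), ((4,2,3), (0,1,4)), ((4,2,6), (0,1,4)), ((4,3,1), (0,1,4)), ((4,3,2), (0,1,4)), ((4,3,5), (0,1,4)), ((4,3,6), (0,1,4)),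 ((4,5,0), (0,1,4)), ((4,5,1), (0,1,4)), ((4,5,3), (0,1,4)), ((4,5,6), (0,1,4)), ((4,6,0), (0,1,4)), ((4,6,2), (0,1,4)), ((4,6,3), (0,1,4)), ((4,6,5), (0,1,4)), ((5,0,1), (0,1,4)), ((5,0,2), (0,1,4)), ((5,0,3), (0,1,4)), ((5,0,4), (0,1,4)), ((5,1,0), (0,1,4)), ((5,1,2), (0,1,4)), ((5,1,4), (0,1,4)), ((5,1,6), (0,1,4)), ((5,2,0), (0,1,4)), ((5,2,1), (0,1,4)), ((5,2,3), (0,1,4)), ((5,2,6), (0,1,4)), ((5,3,0), (0,1,4)), ((5,3,2), (0,1,4)), ((5,3,4), (0,1,4)), ((5,3,6), (0,1,4)), ((5,4,0), (0,1,4)), ((5,4,1), (0,1,4)), ((5,4,3), (0,1,4)), ((5,4,6), (0,1,4)), ((5,6,1), (0,1,4)), ((5,6,2), (0,1,4)), ((5,6,3), (0,1,4)), ((5,6,4), (0,1,4)), ((6,0,1), (0,1,4)), ((6,0,2), (0,1,4)), ((6,0,3), (0,1,4)), ((6,0,4), (0,1,4)), ((6,1,0), (0,1,4)), ((6,1,2),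 (0,1,4)), ((6,1,3), (0,1,4)), ((6,1,5), (0,1,4)), ((6,2,0), (0,1,4)), ((6,2,1), (0,1,4)), ((6,2,4), (0,1,4)), ((6,2,5), (0,1,4)), ((6,3,0), (0,1,4)), ((6,3,1), (0,1,4)), ((6,3,4), (0,1,4)), ((6,3,5), (0,1,4)), ((6,4,0), (0,1,4)), ((6,4,2), (0,1,4)), ((6,4,3), (0,1,4)), ((6,4,5), (0,1,4)), ((6,5,1), (0,1,4)), ((6,5,2), (0,1,4)), ((6,5,3), (0,1,4)), ((6,5,4), (0,1,4))]

def cfUTbl : List (T × T) := [((0,1,4), (1,3,0)), ((0,1,5), (1,3,0)), ((0,1,6), (1,3,0)), ((0,2,3), (1,0,3)), ((0,2,4), (1,0,3)), ((0,2,5), (1,0,3)), ((0,2,6), (1,0,3)), ((0,3,1), (1,0,3)), ((0,3,2), (1,0,3)), ((0,3,5), (1,0,3)), ((0,3,6), (1,0,3)), ((0,4,1), (1,0,3)), ((0,4,2), (1,0,3)), ((0,4,5), (1,0,3)), ((0,4,6), (1,0,3)), ((0,5,1), (1,0,3)), ((0,5,2), (1,0,3)), ((0,5,3), (1,0,3)),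 ((0,5,4), (1,0,3)), ((0,6,1), (1,0,3)), ((0,6,2), (1,0,3)), ((0,6,3), (1,0,3)), ((0,6,4), (1,0,3))]

def cfVTbl : List (T × T) := [((0,1,4), (3,0,1)), ((0,1,5), (0,3,1)), ((0,1,6), (0,3,1)), ((0,2,3), (3,0,1)), ((0,2,4), (3,0,1)), ((0,2,5), (0,3,1)), ((0,2,6), (0,3,1)), ((1,0,3), (0,3,1)), ((1,0,4), (0,3,1)), ((1,0,5), (0,3,1)), ((1,0,6), (0,3,1)), ((1,2,3), (0,3,1)), ((1,2,4), (0,3,1)), ((1,2,5), (0,3,1)), ((1,2,6), (0,3,1)), ((2,0,3), (0,3,1)), ((2,0,4), (0,3,1)), ((2,0,5), (0,3,1)), ((2,0,6), (0,3,1)), ((2,1,3), (0,3,1)), ((2,1,4), (0,3,1)), ((2,1,5), (0,3,1)), ((2,1,6), (0,3,1))]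

set_option maxRecDepth 1000000
set_option maxHeartbeats 10000000

theorem D_V_mul : ∀ t : T, Ok t → Vmem t → ∀ s : T, Ok s → Vmem s → Vmem (mulT t s) := by
  decide

theorem D_V_inv : ∀ t : T, Ok t → Vmem t → Vmem (invT t) := by decide

theorem D_EC1 : ∀ t : T, t.1 = 0 → Ok t →
    Ok ((ec1Tbl.lookup t).getD idT) ∧
      Vmem (mulT (mulT ((ec1Tbl.lookup t).getD idT) t) (invT ((ec1Tbl.lookup t).getD idT))) := by
  decide

theorem D_EC2 : ∀ t : T, Vmem t → Ok t →
    Ok ((ec2Tbl.lookup t).getD idT) ∧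
      Umem (mulT (mulT ((ec2Tbl.lookup t).getD idT) t) (invT ((ec2Tbl.lookup t).getD idT))) := by
  decide

theorem D_NC : ∀ c : T, Ok c →
    Umem ((ncTbl.lookup c).getD idT) ∧ Ok ((ncTbl.lookup c).getD idT) ∧
      ¬ Vmem (mulT (mulT c ((ncTbl.lookup c).getD idT)) (invT c)) := by
  decide

theorem D_CF_U : ∀ t : T, t.1 = 0 → Ok t → t ≠ idT →
    Ok ((cfUTbl.lookup t).getD idT) ∧
      ¬ Umem (mulT (mulT ((cfUTbl.lookup t).getD idT) t) (invT ((cfUTbl.lookup t).getD idT))) := by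
  decide

theorem D_CF_V : ∀ t : T, Vmem t → Ok t → t ≠ idT →
    Ok ((cfVTbl.lookup t).getD idT) ∧
      ¬ Vmem (mulT (mulT ((cfVTbl.lookup t).getD idT) t) (invT ((cfVTbl.lookup t).getD idT))) := by
  decide

theorem D_cardG : Fintype.card G0 = 168 := by decide

def U0 : Subgroup G0 where
  carrier := {a | Umem a.1}
  one_mem' := by show Umem idT; exact rfl
  mul_mem' := by
    intro a b ha hb
    show Fn a.1 (Fn b.1 0) = 0
    rw [Fn_zero b.1, hb, Fn_zero a.1, ha]
  inv_mem' := by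
    intro a ha
    show Umem (invT a.1)
    have h := ((D_inv a.1 a.2).2 0).1
    rw [Fn_zero a.1, ha] at h
    show (invT a.1).1 = 0
    rw [← Fn_zero (invT a.1), h]

def V0 : Subgroup G0 where
  carrier := {a | Vmem a.1}
  one_mem' := by show Vmem idT; decide
  mul_mem' := fun {a b} ha hb => D_V_mul a.1 a.2 ha b.1 b.2 hb
  inv_mem' := fun {a} ha => D_V_inv a.1 a.2 ha

theorem mem_U0 (a : G0) : a ∈ U0 ↔ Umem a.1 := Iff.rfl
theorem mem_V0 (a : G0) : a ∈ V0 ↔ Vmem a.1 := Iff.rfl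

instance : DecidablePred (· ∈ U0) := fun a => decidable_of_iff _ (mem_U0 a).symm
instance : DecidablePred (· ∈ V0) := fun a => decidable_of_iff _ (mem_V0 a).symm

set_option maxRecDepth 1000000
set_option maxHeartbeats 10000000

def UT : Type := {t : T // (Ok t ∧ Umem t)}
def VT : Type := {t : T // (Ok t ∧ Vmem t)}
instance : Fintype UT := Subtype.fintype _
instance : Fintype VT := Subtype.fintype _

def equivUT : ↥U0 ≃ UT where
  toFun a := ⟨a.1.1, a.1.2, a.2⟩
  invFun t := ⟨⟨t.1, t.2.1⟩, t.2.2⟩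
  left_inv a := rfl
  right_inv t := rfl

def equivVT : ↥V0 ≃ VT where
  toFun a := ⟨a.1.1, a.1.2, a.2⟩
  invFun t := ⟨⟨t.1, t.2.1⟩, t.2.2⟩
  left_inv a := rfl
  right_inv t := rfl

theorem D_cardUT : Fintype.card UT = 24 := by decide
theorem D_cardVT : Fintype.card VT = 24 := by decide

theorem D_cardU : Nat.card ↥U0 = 24 := by
  rw [Nat.card_congr equivUT, Nat.card_eq_fintype_card]
  exact D_cardUT

theorem D_cardV : Nat.card ↥V0 = 24 := by
  rw [Nat.card_congr equivVT, Nat.card_eq_fintype_card]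
  exact D_cardVT

theorem cardG : Nat.card G0 = 168 := by rw [Nat.card_eq_fintype_card]; exact D_cardG

-- conjugation at triple level
theorem conj_val (c x : G0) : (c * x * c⁻¹).1 = mulT (mulT c.1 x.1) (invT c.1) := rfl




theorem base_EC1 : ∀ h ∈ U0, ∃ k ∈ V0, IsConj h k := by
  intro h hh
  obtain ⟨okc, hv⟩ := D_EC1 h.1 hh h.2
  set c : G0 := ⟨(ec1Tbl.lookup h.1).getD idT, okc⟩ with hc
  refine ⟨c * h * c⁻¹, ?_, isConj_iff.mpr ⟨c, rfl⟩⟩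
  show Vmem ((c * h * c⁻¹).1)
  exact hv

theorem base_EC2 : ∀ k ∈ V0, ∃ h ∈ U0, IsConj k h := by
  intro k hk
  obtain ⟨okc, hu⟩ := D_EC2 k.1 hk k.2
  set c : G0 := ⟨(ec2Tbl.lookup k.1).getD idT, okc⟩ with hc
  refine ⟨c * k * c⁻¹, ?_, isConj_iff.mpr ⟨c, rfl⟩⟩
  show Umem ((c * k * c⁻¹).1)
  exact hu

theorem base_NC : ¬ ∃ g : G0, Subgroup.map (MulAut.conj g).toMonoidHom U0 = V0 := by
  rintro ⟨g, hg⟩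
  obtain ⟨hu, hok, hnv⟩ := D_NC g.1 g.2
  set x : G0 := ⟨(ncTbl.lookup g.1).getD idT, hok⟩ with hx
  have hxU : x ∈ U0 := hu
  have h2 : (MulAut.conj g).toMonoidHom x ∈ Subgroup.map (MulAut.conj g).toMonoidHom U0 :=
    Subgroup.mem_map_of_mem _ hxU
  rw [hg] at h2
  have h3 : g * x * g⁻¹ ∈ V0 := h2
  exact hnv h3

theorem base_CF_U : U0.normalCore = ⊥ := by
  rw [eq_bot_iff]
  intro x hx
  have hx' : ∀ g : G0, g * x * g⁻¹ ∈ U0 := hx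
  rw [Subgroup.mem_bot]
  by_contra hne
  have hxU : x ∈ U0 := by
    have h1 := hx' 1
    rwa [one_mul, inv_one, mul_one] at h1
  have hxid : x.1 ≠ idT := fun h => hne (Subtype.ext h)
  obtain ⟨okc, hno⟩ := D_CF_U x.1 hxU x.2 hxid
  set c : G0 := ⟨(cfUTbl.lookup x.1).getD idT, okc⟩ with hc
  exact hno (hx' c)

theorem base_CF_V : V0.normalCore = ⊥ := by
  rw [eq_bot_iff]
  intro x hx
  have hx' : ∀ g : G0, g * x * g⁻¹ ∈ V0 := hx
  rw [Subgroup.mem_bot]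
  by_contra hne
  have hxV : x ∈ V0 := by
    have h1 := hx' 1
    rwa [one_mul, inv_one, mul_one] at h1
  have hxid : x.1 ≠ idT := fun h => hne (Subtype.ext h)
  obtain ⟨okc, hno⟩ := D_CF_V x.1 hxV x.2 hxid
  set c : G0 := ⟨(cfVTbl.lookup x.1).getD idT, okc⟩ with hc
  exact hno (hx' c)

theorem base_index_U : U0.index = 7 := by
  have h := U0.card_mul_index
  rw [D_cardU, cardG] at h
  omega

theorem base_index_V : V0.index = 7 := by
  have h := V0.card_mul_index
  rw [D_cardV, cardG] at h
  omega

def w1 : G0 := ⟨(0,3,1), by decide⟩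
def w2 : G0 := ⟨(1,0,3), by decide⟩

theorem base_U_ne_bot : U0 ≠ ⊥ := by
  intro h
  have hm : w1 ∈ U0 := by show Umem ((0,3,1) : T); decide
  rw [h, Subgroup.mem_bot] at hm
  have h2 : ((0,3,1) : T) = idT := congrArg Subtype.val hm
  exact absurd h2 (by decide)

theorem base_V_ne_bot : V0 ≠ ⊥ := by
  intro h
  have hm : w2 ∈ V0 := by show Vmem ((1,0,3) : T); decide
  rw [h, Subgroup.mem_bot] at hm
  have h2 : ((1,0,3) : T) = idT := congrArg Subtype.val hm
  exact absurd h2 (by decide)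

instance : Finite G0 := Finite.of_fintype _

end ECBase


namespace ECStep

open Equiv SemidirectProduct

variable (S : Type) [Group S]

/-- the permutation action of `Perm Bool` on `Bool → S` -/
def pAut : Perm Bool →* MulAut (Bool → S) where
  toFun σ :=
    { toFun := fun f => f ∘ σ.symm
      invFun := fun f => f ∘ σ
      left_inv := fun f => by funext b; simp
      right_inv := fun f => by funext b; simp
      map_mul' := fun f g => rfl }
  map_one' := by
    apply MulEquiv.ext; intro f; rfl
  map_mul' := fun σ τ => by
    apply MulEquiv.ext; intro f; rfl

theorem pAut_apply (σ : Perm Bool) (f : Bool → S) : pAut S σ f = f ∘ σ.symm := rfl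

/-- wreath-type product `S ≀ C₂` -/
abbrev W : Type := (Bool → S) ⋊[pAut S] Perm Bool

def equivProd : W S ≃ (Bool → S) × Perm Bool where
  toFun w := (w.left, w.right)
  invFun p := ⟨p.1, p.2⟩
  left_inv w := rfl
  right_inv p := rfl

instance [Finite S] : Finite (W S) := Finite.of_equiv _ (equivProd S).symm

variable {S}

/-- wreath of a subgroup -/
def wr (H : Subgroup S) : Subgroup (W S) where
  carrier := {w | ∀ b, w.left b ∈ H}
  one_mem' := fun _ => H.one_mem
  mul_mem' := by
    intro a b ha hb b0
    rw [mul_left]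
    exact H.mul_mem (ha b0) (hb _)
  inv_mem' := by
    intro a ha b0
    rw [inv_left, pAut_apply]
    exact H.inv_mem (ha _)

theorem mem_wr {H : Subgroup S} (w : W S) : w ∈ wr H ↔ ∀ b, w.left b ∈ H := Iff.rfl

theorem perm_bool_cases : ∀ σ : Perm Bool, σ = 1 ∨ σ = Equiv.swap false true := by decide

def tau : Perm Bool := Equiv.swap false true

theorem tau_ne_one : tau ≠ 1 := by decide
theorem tau_apply : ∀ b, tau b = !b := by decide
theorem tau_symm : tau.symm = tau := by decide

/-- conjugation of a general element by a base element -/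
theorem conj_formula (c n : Bool → S) (σ : Perm Bool) :
    (⟨c, 1⟩ : W S) * ⟨n, σ⟩ * (⟨c, 1⟩ : W S)⁻¹ =
      ⟨fun b => c b * n b * (c (σ.symm b))⁻¹, σ⟩ := by
  apply SemidirectProduct.ext
  · show (c * pAut S 1 n) * pAut S (1 * σ) (pAut S (1:Perm Bool)⁻¹ c⁻¹) = _
    simp only [map_one, MulAut.one_apply, inv_one, one_mul]
    funext b
    simp [pAut_apply, Pi.mul_apply, Pi.inv_apply, mul_assoc]
  · show 1 * σ * 1⁻¹ = σ
    simp

/-- conjugation of a base-element by a general element -/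
theorem conj_base (g : W S) (n : Bool → S) :
    g * ⟨n, 1⟩ * g⁻¹ = ⟨g.left * pAut S g.right n * g.left⁻¹, 1⟩ := by
  apply SemidirectProduct.ext
  · show (g.left * pAut S g.right n) * pAut S (g.right * 1) (pAut S g.right⁻¹ g.left⁻¹) = _
    rw [mul_one, map_inv (pAut S) g.right, MulAut.apply_inv_self]
  · show g.right * 1 * g.right⁻¹ = 1
    simp

theorem ec_step {H K : Subgroup S} (hec : ∀ h ∈ H, ∃ k ∈ K, IsConj h k) :
    ∀ x ∈ wr H, ∃ y ∈ wr K, IsConj x y := by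
  rintro ⟨n, σ⟩ hx
  have hn : ∀ b, n b ∈ H := hx
  rcases perm_bool_cases σ with rfl | rfl
  · -- diagonal case: conjugate componentwise
    obtain ⟨kf, hkf, hcf⟩ := hec (n false) (hn false)
    obtain ⟨kt, hkt, hct⟩ := hec (n true) (hn true)
    obtain ⟨zf, hzf⟩ := isConj_iff.mp hcf
    obtain ⟨zt, hzt⟩ := isConj_iff.mp hct
    set c : Bool → S := fun b => if b then zt else zf with hc
    refine ⟨(⟨c, 1⟩ : W S) * ⟨n, 1⟩ * (⟨c, 1⟩ : W S)⁻¹, ?_, isConj_iff.mpr ⟨_, rfl⟩⟩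
    rw [conj_formula]
    intro b
    show c b * n b * (c ((1 : Perm Bool).symm b))⁻¹ ∈ K
    have hsb : (1 : Perm Bool).symm b = b := rfl
    rw [hsb]
    cases b
    · show zf * n false * zf⁻¹ ∈ K
      rw [hzf]; exact hkf
    · show zt * n true * zt⁻¹ ∈ K
      rw [hzt]; exact hkt
  · -- swap case: the cycle product
    obtain ⟨k, hk, hck⟩ := hec (n false * n true) (H.mul_mem (hn false) (hn true))
    obtain ⟨z, hz⟩ := isConj_iff.mp hck
    set c : Bool → S := fun b => if b then z * n false else z with hc
    refine ⟨(⟨c, 1⟩ : W S) * ⟨n, Equiv.swap false true⟩ * (⟨c, 1⟩ : W S)⁻¹, ?_,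
      isConj_iff.mpr ⟨_, rfl⟩⟩
    rw [conj_formula]
    intro b
    show c b * n b * (c ((Equiv.swap false true).symm b))⁻¹ ∈ K
    have hsymm : (Equiv.swap false true).symm = Equiv.swap false true := by decide
    rw [hsymm]
    cases b
    · have hb : Equiv.swap false true false = true := by decide
      rw [hb]
      show z * n false * (z * n false)⁻¹ ∈ K
      rw [mul_inv_cancel]; exact K.one_mem
    · have hb : Equiv.swap false true true = false := by decide
      rw [hb]
      show (z * n false) * n true * z⁻¹ ∈ K
      have : (z * n false) * n true * z⁻¹ = z * (n false * n true) * z⁻¹ := by group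
      rw [this, hz]; exact hk
    
theorem nc_step {H K : Subgroup S}
    (hnc : ¬ ∃ z : S, Subgroup.map (MulAut.conj z).toMonoidHom H = K) :
    ¬ ∃ g : W S, Subgroup.map (MulAut.conj g).toMonoidHom (wr H) = wr K := by
  rintro ⟨g, hg⟩
  apply hnc
  refine ⟨g.left false, le_antisymm ?_ ?_⟩
  · rintro - ⟨h, hh, rfl⟩
    show g.left false * h * (g.left false)⁻¹ ∈ K
    have hxH : (⟨fun _ => h, 1⟩ : W S) ∈ wr H := fun b => hh
    have hmem : (MulAut.conj g).toMonoidHom (⟨fun _ => h, 1⟩ : W S) ∈ wr K := by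
      rw [← hg]; exact Subgroup.mem_map_of_mem _ hxH
    have hconj : (MulAut.conj g).toMonoidHom (⟨fun _ => h, 1⟩ : W S) =
        ⟨g.left * pAut S g.right (fun _ => h) * g.left⁻¹, 1⟩ := conj_base g _
    rw [hconj] at hmem
    have := hmem false
    simpa [pAut_apply, Pi.mul_apply, Pi.inv_apply] using this
  · intro k hk
    have hkW : (⟨fun _ => k, 1⟩ : W S) ∈ wr K := fun b => hk
    rw [← hg] at hkW
    obtain ⟨x, hxH, hxe⟩ := hkW
    have hxe' : g * x * g⁻¹ = ⟨fun _ => k, 1⟩ := hxe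
    -- x.right = 1
    have hr : g.right * x.right * g.right⁻¹ = 1 := by
      have := congrArg SemidirectProduct.right hxe'
      simpa using this
    have hxr : x.right = 1 := by
      have h1 : g.right * x.right * g.right⁻¹ * g.right = 1 * g.right := by rw [hr]
      have h2 : g.right * x.right = g.right := by
        rw [mul_assoc, inv_mul_cancel, mul_one] at h1
        rw [h1, one_mul]
      exact mul_left_cancel (h2.trans (mul_one g.right).symm)
    have hxeq : x = ⟨x.left, 1⟩ := by
      apply SemidirectProduct.ext
      · rfl
      · exact hxr
    rw [hxeq] at hxe'
    rw [conj_base g x.left] at hxe'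
    have hleft := congrArg SemidirectProduct.left hxe'
    have hf := congrFun hleft false
    simp only [pAut_apply, Pi.mul_apply, Pi.inv_apply, Function.comp_apply] at hf
    refine ⟨x.left (g.right.symm false), hxH _, ?_⟩
    show g.left false * x.left (g.right.symm false) * (g.left false)⁻¹ = k
    exact hf

theorem core_step {H : Subgroup S} (hcore : H.normalCore = ⊥) (htop : H ≠ ⊤) :
    (wr H).normalCore = ⊥ := by
  rw [eq_bot_iff]
  rintro ⟨n, σ⟩ hx
  have hx' : ∀ g : W S, g * ⟨n, σ⟩ * g⁻¹ ∈ wr H := hx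
  rw [Subgroup.mem_bot]
  rcases perm_bool_cases σ with rfl | rfl
  · -- components are in the normal core of H
    have hcomp : ∀ b, n b = 1 := by
      intro b
      have hmem : n b ∈ H.normalCore := by
        intro s
        have := hx' ⟨fun _ => s, 1⟩
        rw [conj_formula] at this
        have h2 := this b
        simpa using h2
      rwa [hcore, Subgroup.mem_bot] at hmem
    apply SemidirectProduct.ext
    · funext b; exact hcomp b
    · rfl
  · -- swap part: every element of S would be in H
    exfalso
    apply htop
    rw [eq_top_iff]
    intro w _
    have := hx' ⟨(fun b => if b then (w⁻¹ * n false) else 1), 1⟩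
    rw [conj_formula] at this
    have h2 := this false
    have hsw : (Equiv.swap false true).symm false = true := by decide
    simp only [hsw] at h2
    have h3 : (1 : S) * n false * (w⁻¹ * n false)⁻¹ ∈ H := h2
    have h4 : (1 : S) * n false * (w⁻¹ * n false)⁻¹ = w := by group
    rwa [h4] at h3

/-- pair function -/
def pF (s y : S) : Bool → S := fun b => if b then y else s

theorem pF_mul (s y s' y' : S) : pF s y * pF s' y' = pF (s * s') (y * y') := by
  funext b; cases b <;> rfl

theorem pF_inv (s y : S) : (pF s y)⁻¹ = pF s⁻¹ y⁻¹ := by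
  funext b; cases b <;> rfl

theorem pF_one : pF (1 : S) 1 = 1 := by
  funext b; cases b <;> rfl

theorem mk_base_mul (n m : Bool → S) : (⟨n, 1⟩ : W S) * ⟨m, 1⟩ = ⟨n * m, 1⟩ := by
  apply SemidirectProduct.ext
  · show n * pAut S 1 m = n * m
    rw [map_one]; rfl
  · show (1 : Perm Bool) * 1 = 1
    rw [mul_one]

theorem mk_base_inv (n : Bool → S) : (⟨n, 1⟩ : W S)⁻¹ = ⟨n⁻¹, 1⟩ := by
  apply SemidirectProduct.ext
  · show pAut S (1 : Perm Bool)⁻¹ n⁻¹ = n⁻¹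
    rw [inv_one, map_one]; rfl
  · show (1 : Perm Bool)⁻¹ = 1
    rw [inv_one]

theorem coatom_step {H : Subgroup S} (hH : IsCoatom H) (hcore : H.normalCore = ⊥)
    (hbot : H ≠ ⊥) : IsCoatom (wr H) := by
  constructor
  · -- wr H ≠ ⊤
    intro htop
    obtain ⟨s, hs⟩ : ∃ s : S, s ∉ H := by
      by_contra hall
      push_neg at hall
      exact hH.1 ((Subgroup.eq_top_iff' H).mpr hall)
    have : (⟨fun _ => s, 1⟩ : W S) ∈ wr H := by rw [htop]; trivial
    exact hs (this false)
  · intro M hM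
    -- τ-hat and all ⟨1, ρ⟩ are in wr H ≤ M
    have hperm : ∀ ρ : Perm Bool, (⟨1, ρ⟩ : W S) ∈ M := fun ρ =>
      hM.le (fun b => H.one_mem)
    -- get an element of M with a component outside H, of the form ⟨n, 1⟩ with n false ∉ H
    obtain ⟨m, hmM, hmH⟩ := SetLike.exists_of_lt hM
    have hbase : (⟨m.left, 1⟩ : W S) ∈ M := by
      have h1 : (⟨(1 : Bool → S), m.right⟩ : W S)⁻¹ ∈ M := M.inv_mem (hperm m.right)
      have h2 := M.mul_mem hmM h1
      have h3 : m * (⟨(1 : Bool → S), m.right⟩ : W S)⁻¹ = ⟨m.left, 1⟩ := by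
        apply SemidirectProduct.ext
        · show m.left * pAut S m.right (pAut S m.right⁻¹ (1 : Bool → S)⁻¹) = m.left
          rw [inv_one, map_one, map_one]
          show m.left * 1 = m.left
          rw [mul_one]
        · show m.right * m.right⁻¹ = 1
          rw [mul_inv_cancel]
      rwa [h3] at h2
    obtain ⟨b0, hb0⟩ : ∃ b, m.left b ∉ H := by
      by_contra hall
      push_neg at hall
      exact hmH hall
    obtain ⟨n, hnM, hnH⟩ : ∃ n : Bool → S, (⟨n, 1⟩ : W S) ∈ M ∧ n false ∉ H := by
      cases b0
      · exact ⟨m.left, hbase, hb0⟩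
      · refine ⟨m.left ∘ tau, ?_, ?_⟩
        · have h1 := M.mul_mem (M.mul_mem (hperm tau) hbase) (M.inv_mem (hperm tau))
          have h2 : (⟨1, tau⟩ : W S) * ⟨m.left, 1⟩ * (⟨1, tau⟩ : W S)⁻¹ =
              ⟨m.left ∘ tau, 1⟩ := by
            apply SemidirectProduct.ext
            · show (1 : Bool → S) * pAut S tau m.left *
                  pAut S (tau * 1) (pAut S tau⁻¹ (1 : Bool → S)⁻¹) = m.left ∘ tau
              rw [inv_one, mul_one, map_one, map_one]
              show 1 * pAut S tau m.left * 1 = m.left ∘ tau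
              rw [one_mul, mul_one, pAut_apply, tau_symm]
            · show tau * 1 * (tau * 1)⁻¹ = 1
              rw [mul_inv_cancel]
          rwa [h2] at h1
        · show m.left (tau false) ∉ H
          rw [show tau false = true from rfl]
          exact hb0
    -- the projection subgroup P1
    set P1 : Subgroup S :=
      { carrier := {s | ∃ y, (⟨pF s y, 1⟩ : W S) ∈ M}
        one_mem' := ⟨1, by rw [pF_one]; exact M.one_mem⟩
        mul_mem' := by
          rintro a b ⟨ya, hya⟩ ⟨yb, hyb⟩
          refine ⟨ya * yb, ?_⟩
          have := M.mul_mem hya hyb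
          rwa [mk_base_mul, pF_mul] at this
        inv_mem' := by
          rintro a ⟨y, hy⟩
          refine ⟨y⁻¹, ?_⟩
          have := M.inv_mem hy
          rwa [mk_base_inv, pF_inv] at this } with hP1
    have hmemP1 : ∀ s : S, s ∈ P1 ↔ ∃ y, (⟨pF s y, 1⟩ : W S) ∈ M := fun s => Iff.rfl
    have hHP1 : H ≤ P1 := by
      intro h hh
      refine ⟨1, hM.le ?_⟩
      intro b
      cases b
      · exact hh
      · exact H.one_mem
    have hP1top : P1 = ⊤ := by
      apply hH.2
      apply lt_of_le_of_ne hHP1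
      intro heq
      apply hnH
      rw [heq]
      refine ⟨n true, ?_⟩
      have : pF (n false) (n true) = n := by funext b; cases b <;> rfl
      rwa [this]
    -- the subgroup A
    set A : Subgroup S :=
      { carrier := {a | (⟨pF a 1, 1⟩ : W S) ∈ M}
        one_mem' := by
          show (⟨pF (1:S) 1, 1⟩ : W S) ∈ M
          rw [pF_one]; exact M.one_mem
        mul_mem' := by
          intro a b ha hb
          have := M.mul_mem ha hb
          rwa [mk_base_mul, pF_mul, mul_one] at this
        inv_mem' := by
          intro a ha
          have := M.inv_mem ha
          rwa [mk_base_inv, pF_inv, inv_one] at this } with hA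
    have hHA : H ≤ A := by
      intro h hh
      show (⟨pF h 1, 1⟩ : W S) ∈ M
      apply hM.le
      intro b
      cases b
      · exact hh
      · exact H.one_mem
    -- A is normal
    have hAnormal : A.Normal := by
      constructor
      intro a ha s
      have hsP1 : s ∈ P1 := hP1top ▸ Subgroup.mem_top s
      obtain ⟨y, hy⟩ := hsP1
      have hconj := M.mul_mem (M.mul_mem hy ha) (M.inv_mem hy)
      have heq : (⟨pF s y, 1⟩ : W S) * ⟨pF a 1, 1⟩ * (⟨pF s y, 1⟩ : W S)⁻¹ =
          ⟨pF (s * a * s⁻¹) 1, 1⟩ := by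
        rw [conj_formula]
        apply SemidirectProduct.ext
        · funext b
          cases b
          · show pF s y false * pF a 1 false * (pF s y false)⁻¹ = s * a * s⁻¹
            rfl
          · show pF s y true * pF a 1 true * (pF s y true)⁻¹ = 1
            show y * 1 * y⁻¹ = 1
            rw [mul_one, mul_inv_cancel]
        · rfl
      rwa [heq] at hconj
    -- case split on A
    rcases eq_or_lt_of_le hHA with heq | hlt
    · -- A = H would make H normal, contradiction
      exfalso
      rw [← heq] at hAnormal
      have : H ≤ H.normalCore := Subgroup.normal_le_normalCore.mpr le_rfl
      rw [hcore, le_bot_iff] at this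
      exact hbot this
    · have hAtop : A = ⊤ := hH.2 A hlt
      -- now show M = ⊤
      rw [eq_top_iff]
      rintro ⟨f, ρ⟩ -
      have hf0 : ∀ a : S, (⟨pF a 1, 1⟩ : W S) ∈ M := by
        intro a
        have : a ∈ A := hAtop ▸ Subgroup.mem_top a
        exact this
      have hf1 : ∀ a : S, (⟨pF 1 a, 1⟩ : W S) ∈ M := by
        intro a
        have h1 := M.mul_mem (M.mul_mem (hperm tau) (hf0 a)) (M.inv_mem (hperm tau))
        have h2 : (⟨1, tau⟩ : W S) * ⟨pF a 1, 1⟩ * (⟨1, tau⟩ : W S)⁻¹ = ⟨pF 1 a, 1⟩ := by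
          apply SemidirectProduct.ext
          · show (1 : Bool → S) * pAut S tau (pF a 1) *
                pAut S (tau * 1) (pAut S tau⁻¹ (1 : Bool → S)⁻¹) = pF 1 a
            rw [inv_one, mul_one, map_one, map_one]
            show 1 * pAut S tau (pF a 1) * 1 = pF 1 a
            rw [one_mul, mul_one, pAut_apply, tau_symm]
            funext b
            cases b <;> rfl
          · show tau * 1 * (tau * 1)⁻¹ = 1
            rw [mul_inv_cancel]
        rwa [h2] at h1
      have hbase_all : (⟨f, 1⟩ : W S) ∈ M := by
        have := M.mul_mem (hf0 (f false)) (hf1 (f true))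
        rw [mk_base_mul, pF_mul, mul_one, one_mul] at this
        have heq : pF (f false) (f true) = f := by funext b; cases b <;> rfl
        rwa [heq] at this
      have hsplit : (⟨f, ρ⟩ : W S) = ⟨f, 1⟩ * ⟨1, ρ⟩ := by
        apply SemidirectProduct.ext
        · show f = f * pAut S 1 (1 : Bool → S)
          rw [map_one]
          show f = f * 1
          rw [mul_one]
        · show ρ = 1 * ρ
          rw [one_mul]
      rw [hsplit]
      exact M.mul_mem hbase_all (hperm ρ)

def equivWr (H : Subgroup S) : ↥(wr H) ≃ (↥H × ↥H) × Perm Bool where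
  toFun w := ((⟨w.1.left false, w.2 false⟩, ⟨w.1.left true, w.2 true⟩), w.1.right)
  invFun p := ⟨⟨fun b => if b then (p.1.2 : S) else (p.1.1 : S), p.2⟩, by
    intro b; cases b
    · exact p.1.1.2
    · exact p.1.2.2⟩
  left_inv w := by
    apply Subtype.ext
    apply SemidirectProduct.ext
    · funext b; cases b <;> rfl
    · rfl
  right_inv p := rfl

theorem card_W [Finite S] : Nat.card (W S) = Nat.card S ^ 2 * 2 := by
  rw [Nat.card_congr (equivProd S), Nat.card_prod,
    Nat.card_congr (Equiv.boolArrowEquivProd S), Nat.card_prod]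
  have h2 : Nat.card (Perm Bool) = 2 := by
    rw [Nat.card_eq_fintype_card]
    simp [Fintype.card_perm]
  rw [h2, sq]

theorem card_wr [Finite S] (H : Subgroup S) : Nat.card ↥(wr H) = Nat.card ↥H ^ 2 * 2 := by
  rw [Nat.card_congr (equivWr H), Nat.card_prod, Nat.card_prod]
  have h2 : Nat.card (Perm Bool) = 2 := by
    rw [Nat.card_eq_fintype_card]
    simp [Fintype.card_perm]
  rw [h2, sq]

theorem index_wr [Finite S] (H : Subgroup S) : (wr H).index = H.index ^ 2 := by
  have h1 := (wr H).card_mul_index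
  have h2 := H.card_mul_index
  rw [card_wr, card_W] at h1
  have hpos : 0 < Nat.card ↥H := Nat.card_pos
  have key : Nat.card ↥H ^ 2 * 2 * (wr H).index = Nat.card ↥H ^ 2 * 2 * H.index ^ 2 := by
    rw [h1, ← h2]
    ring
  exact Nat.eq_of_mul_eq_mul_left (by positivity) key

theorem wr_ne_bot (H : Subgroup S) : wr H ≠ ⊥ := by
  intro h
  have hmem : (⟨1, tau⟩ : W S) ∈ wr H := fun b => H.one_mem
  rw [h, Subgroup.mem_bot] at hmem
  have := congrArg SemidirectProduct.right hmem
  exact tau_ne_one this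

end ECStep


/-- a subgroup of prime index is maximal -/
theorem coatom_of_prime_index {G : Type} [Group G] {H : Subgroup G}
    (hp : H.index.Prime) : IsCoatom H := by
  constructor
  · intro h
    rw [h, Subgroup.index_top] at hp
    exact Nat.not_prime_one hp
  · intro M hM
    have hle := hM.le
    have hrel := Subgroup.relIndex_mul_index hle
    have hdvd : M.index ∣ H.index := Dvd.intro_left _ hrel
    rcases (Nat.Prime.eq_one_or_self_of_dvd hp _ hdvd) with h1 | hs
    · exact Subgroup.index_eq_one.mp h1
    · exfalso
      rw [hs] at hrel
      have hne : H.index ≠ 0 := Nat.Prime.ne_zero hp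
      have hrel1 : H.relIndex M = 1 :=
        Nat.eq_of_mul_eq_mul_right (Nat.pos_of_ne_zero hne) (by rw [hrel, one_mul])
      have := Subgroup.relIndex_eq_one.mp hrel1
      exact (not_le_of_gt hM) this

def GoodPack (N : ℕ) : Prop :=
  ∃ (G : Type) (_ : Group G) (_ : Finite G) (U V : Subgroup G),
    (∀ h ∈ U, ∃ k ∈ V, IsConj h k) ∧ (∀ k ∈ V, ∃ h ∈ U, IsConj k h) ∧
    (¬ ∃ g : G, Subgroup.map (MulAut.conj g).toMonoidHom U = V) ∧
    IsCoatom U ∧ IsCoatom V ∧ U.normalCore = ⊥ ∧ V.normalCore = ⊥ ∧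
    U ≠ ⊥ ∧ V ≠ ⊥ ∧ U.index = V.index ∧ 2 ≤ U.index ∧ N < U.index

theorem pack_zero : GoodPack 0 := by
  refine ⟨ECBase.G0, inferInstance, inferInstance, ECBase.U0, ECBase.V0,
    ECBase.base_EC1, ECBase.base_EC2, ECBase.base_NC, ?_, ?_,
    ECBase.base_CF_U, ECBase.base_CF_V, ECBase.base_U_ne_bot, ECBase.base_V_ne_bot, ?_, ?_, ?_⟩
  · exact coatom_of_prime_index (by rw [ECBase.base_index_U]; norm_num)
  · exact coatom_of_prime_index (by rw [ECBase.base_index_V]; norm_num)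
  · rw [ECBase.base_index_U, ECBase.base_index_V]
  · rw [ECBase.base_index_U]; norm_num
  · rw [ECBase.base_index_U]; norm_num

theorem pack_succ (N : ℕ) : GoodPack N → GoodPack (N + 1) := by
  rintro ⟨G, _, _, U, V, hec1, hec2, hnc, hcU, hcV, hfU, hfV, hbU, hbV, hidx, h2, hN⟩
  refine ⟨ECStep.W G, inferInstance, inferInstance, ECStep.wr U, ECStep.wr V,
    ECStep.ec_step hec1, ECStep.ec_step hec2, ECStep.nc_step hnc,
    ECStep.coatom_step hcU hfU hbU, ECStep.coatom_step hcV hfV hbV,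
    ECStep.core_step hfU hcU.1, ECStep.core_step hfV hcV.1,
    ECStep.wr_ne_bot U, ECStep.wr_ne_bot V, ?_, ?_, ?_⟩
  · rw [ECStep.index_wr, ECStep.index_wr, hidx]
  · rw [ECStep.index_wr]
    nlinarith
  · rw [ECStep.index_wr]
    nlinarith

theorem pack_all (N : ℕ) : GoodPack N := by
  induction N with
  | zero => exact pack_zero
  | succ n ih => exact pack_succ n ih

/-- Unbounded index: for every `N` there is a finite group `G` with subgroups `U`, `V`
that are elementwise conjugate but not conjugate, both maximal, both with trivial normal
core, and with equal index `[G : U] = [G : V] > N`. -/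
theorem exists_EC_triple_MAX_FF_unbounded_index (N : ℕ) :
    ∃ (G : Type) (_ : Group G) (_ : Finite G) (U V : Subgroup G),
      ((∀ h ∈ U, ∃ k ∈ V, IsConj h k) ∧ (∀ k ∈ V, ∃ h ∈ U, IsConj k h)) ∧
      (¬ ∃ g : G, Subgroup.map (MulAut.conj g).toMonoidHom U = V) ∧
      IsCoatom U ∧ IsCoatom V ∧
      U.normalCore = ⊥ ∧ V.normalCore = ⊥ ∧
      U.index = V.index ∧ N < U.index := by
  obtain ⟨G, _, _, U, V, hec1, hec2, hnc, hcU, hcV, hfU, hfV, _, _, hidx, _, hN⟩ := pack_all N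
  exact ⟨G, inferInstance, inferInstance, U, V, ⟨hec1, hec2⟩, hnc, hcU, hcV, hfU, hfV, hidx, hN⟩
end
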